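/- arXiv:2008.13030 — 5 statements merged into one kernel-verified Lean document; each statement's English description precedes it below -/
import Mathlib

section
/- For q ∈ [1,2], the space L_q(μ) of a measure space satisfies ρ(L_q, u) ≤ u^q / q for all u ∈ (0,1], where ρ is the modulus of smoothness. -/
open MeasureTheory
open scoped ENNReal NNReal

/-- Pointwise Clarkson-type inequality for `1 ≤ q ≤ 2`. -/
lemma clarkson_point {q : ℝ} (hq1 : 1 ≤ q) (hq2 : q ≤ 2) (a b : ℝ) :
    ‖a + b‖₊ ^ q + ‖a - b‖₊ ^ q ≤ 2 * (‖a‖₊ ^ q + ‖b‖₊ ^ q) := by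
  have hq0 : (0:ℝ) < q := lt_of_lt_of_le one_pos hq1
  set s := ‖a + b‖₊
  set t := ‖a - b‖₊
  set A := ‖a‖₊
  set B := ‖b‖₊
  have hsq : s ^ (2:ℝ) + t ^ (2:ℝ) = 2 * (A ^ (2:ℝ) + B ^ (2:ℝ)) := by
    have : ((s:ℝ)) ^ (2:ℝ) + (t:ℝ) ^ (2:ℝ) = 2 * ((A:ℝ) ^ (2:ℝ) + (B:ℝ) ^ (2:ℝ)) := by
      have hs : (s:ℝ) = |a + b| := by simp [s, Real.norm_eq_abs]
      have ht : (t:ℝ) = |a - b| := by simp [t, Real.norm_eq_abs]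
      have hA : (A:ℝ) = |a| := by simp [A, Real.norm_eq_abs]
      have hB : (B:ℝ) = |b| := by simp [B, Real.norm_eq_abs]
      rw [hs, ht, hA, hB]
      rw [show (2:ℝ) = ((2:ℕ):ℝ) by norm_num]
      rw [Real.rpow_natCast, Real.rpow_natCast, Real.rpow_natCast, Real.rpow_natCast]
      rw [sq_abs, sq_abs, sq_abs, sq_abs]
      ring
    exact_mod_cast this
  have h1 : (s ^ q + t ^ q) ^ ((2:ℝ)/q) ≤ 2 ^ ((2:ℝ)/q - 1) * (s ^ (2:ℝ) + t ^ (2:ℝ)) := by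
    have := NNReal.rpow_add_le_mul_rpow_add_rpow (s ^ q) (t ^ q)
      (p := 2/q) (by rw [le_div_iff₀ hq0]; linarith)
    rwa [← NNReal.rpow_mul, ← NNReal.rpow_mul, mul_div_cancel₀ _ hq0.ne'] at this
  have h2 : s ^ q + t ^ q ≤ 2 * (A ^ (2:ℝ) + B ^ (2:ℝ)) ^ (q/2) := by
    have hmono := NNReal.rpow_le_rpow h1 (z := q/2) (by positivity)
    rwa [← NNReal.rpow_mul, div_mul_div_comm, mul_comm q 2, div_self (by positivity),
      NNReal.rpow_one, hsq, NNReal.mul_rpow, NNReal.mul_rpow, ← mul_assoc,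
      ← NNReal.rpow_mul, sub_mul, div_mul_div_comm, mul_comm q 2,
      div_self (by positivity : (2*q:ℝ) ≠ 0), one_mul,
      ← NNReal.rpow_add two_ne_zero, sub_add_cancel, NNReal.rpow_one] at hmono
  have h3 : (A ^ (2:ℝ) + B ^ (2:ℝ)) ^ (q/2) ≤ A ^ q + B ^ q := by
    have := NNReal.rpow_add_le_add_rpow (A ^ (2:ℝ)) (B ^ (2:ℝ))
      (p := q/2) (by positivity) (by rw [div_le_one (by norm_num)]; linarith)
    rwa [← NNReal.rpow_mul, ← NNReal.rpow_mul,
      show (2:ℝ) * (q/2) = q by ring] at this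
  calc s ^ q + t ^ q ≤ 2 * (A ^ (2:ℝ) + B ^ (2:ℝ)) ^ (q/2) := h2
    _ ≤ 2 * (A ^ q + B ^ q) := by gcongr

/-- Integral form of the Clarkson-type inequality. -/
lemma clarkson_lintegral {q : ℝ} (hq1 : 1 ≤ q) (hq2 : q ≤ 2)
    {Ω : Type*} [MeasurableSpace Ω] {μ : Measure Ω} {f g : Ω → ℝ}
    (hf : AEMeasurable f μ) (hg : AEMeasurable g μ) :
    (∫⁻ a, (‖f a + g a‖₊ : ℝ≥0∞) ^ q ∂μ) + (∫⁻ a, (‖f a - g a‖₊ : ℝ≥0∞) ^ q ∂μ)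
      ≤ 2 * ((∫⁻ a, (‖f a‖₊ : ℝ≥0∞) ^ q ∂μ) + (∫⁻ a, (‖g a‖₊ : ℝ≥0∞) ^ q ∂μ)) := by
  have hq0 : (0:ℝ) < q := lt_of_lt_of_le one_pos hq1
  have hmeas1 : AEMeasurable (fun a => (‖f a + g a‖₊ : ℝ≥0∞) ^ q) μ :=
    (hf.add hg).enorm.pow_const q
  rw [← lintegral_add_left' hmeas1, ← lintegral_add_left' (show AEMeasurable (fun a => (‖f a‖₊ : ℝ≥0∞) ^ q) μ from hf.enorm.pow_const q),
    ← lintegral_const_mul' _ _ (by norm_num : (2:ℝ≥0∞) ≠ ⊤)]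
  refine lintegral_mono fun a => ?_
  have h := clarkson_point hq1 hq2 (f a) (g a)
  have : ((‖f a + g a‖₊ ^ q + ‖f a - g a‖₊ ^ q : ℝ≥0) : ℝ≥0∞)
      ≤ ((2 * (‖f a‖₊ ^ q + ‖g a‖₊ ^ q) : ℝ≥0) : ℝ≥0∞) := ENNReal.coe_le_coe.mpr h
  push_cast [ENNReal.coe_rpow_of_nonneg _ hq0.le] at this
  exact this

lemma final_arith {q u N1 N2 : ℝ} (hq1 : 1 ≤ q) (hu0 : 0 < u)
    (hN1 : 0 ≤ N1) (hN2 : 0 ≤ N2) (h : N1 ^ q + N2 ^ q ≤ 2 * (1 + u ^ q)) :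
    (N1 + N2) / 2 - 1 ≤ u ^ q / q := by
  have hq0 : (0:ℝ) < q := lt_of_lt_of_le one_pos hq1
  have hu : (0:ℝ) < u ^ q := Real.rpow_pos_of_pos hu0 q
  have h1 : ((N1 + N2) / 2) ^ q ≤ (N1 ^ q + N2 ^ q) / 2 := by
    have hnn := NNReal.rpow_add_le_mul_rpow_add_rpow (⟨N1, hN1⟩ : ℝ≥0) (⟨N2, hN2⟩ : ℝ≥0) hq1
    have hc : (N1 + N2) ^ q ≤ 2 ^ (q - 1) * (N1 ^ q + N2 ^ q) := by
      have := NNReal.coe_le_coe.mpr hnn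
      push_cast [NNReal.coe_rpow] at this
      exact this
    have h2q : (0:ℝ) < 2 ^ q := Real.rpow_pos_of_pos two_pos q
    rw [Real.div_rpow (by linarith) (by norm_num), div_le_div_iff₀ h2q two_pos]
    calc (N1 + N2) ^ q * 2 ≤ 2 ^ (q - 1) * (N1 ^ q + N2 ^ q) * 2 := by
          have := mul_le_mul_of_nonneg_right hc (by norm_num : (0:ℝ) ≤ 2); linarith
      _ = (N1 ^ q + N2 ^ q) * 2 ^ q := by
          rw [Real.rpow_sub two_pos, Real.rpow_one]; ring
  have h2 : 1 + u ^ q ≤ (1 + u ^ q / q) ^ q := by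
    have hb := one_add_mul_self_le_rpow_one_add
      (s := u ^ q / q) (le_trans (by norm_num) (by positivity : (0:ℝ) ≤ u ^ q / q)) hq1
    rwa [mul_div_cancel₀ _ hq0.ne'] at hb
  have h3 : ((N1 + N2) / 2) ^ q ≤ (1 + u ^ q / q) ^ q := by linarith
  have h4 := (Real.rpow_le_rpow_iff (by positivity) (by positivity) hq0).mp h3
  linarith


open MeasureTheory

/-- The modulus of smoothness `ρ(X, u)` of a normed space `X`. -/
noncomputable def modSmooth (X : Type*) [NormedAddCommGroup X] [NormedSpace ℝ X] (u : ℝ) : ℝ :=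
  sSup {r : ℝ | ∃ x y : X, ‖x‖ = 1 ∧ ‖y‖ = 1 ∧ r = (‖x + u • y‖ + ‖x - u • y‖) / 2 - 1}

/-- For `q ∈ [1,2]`, the space `L_q(μ)` satisfies `ρ(L_q, u) ≤ u^q / q`
for all `u ∈ (0,1]`. -/
theorem stmt5 (q : ℝ) (hq1 : 1 ≤ q) (hq2 : q ≤ 2)
    (Ω : Type*) [MeasurableSpace Ω] (μ : Measure Ω)
    [Fact (1 ≤ ENNReal.ofReal q)]
    (u : ℝ) (hu0 : 0 < u) (hu1 : u ≤ 1) :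
    modSmooth (Lp ℝ (ENNReal.ofReal q) μ) u ≤ u ^ q / q := by
  have hq0 : (0:ℝ) < q := lt_of_lt_of_le one_pos hq1
  set p : ℝ≥0∞ := ENNReal.ofReal q with hp
  have hp0 : p ≠ 0 := by
    simp only [hp, ne_eq, ENNReal.ofReal_eq_zero, not_le]
    exact hq0
  have hpt : p ≠ ∞ := ENNReal.ofReal_ne_top
  have hptr : p.toReal = q := ENNReal.toReal_ofReal hq0.le
  have hJ : ∀ f : Lp ℝ p μ,
      (∫⁻ a, (‖f a‖₊ : ℝ≥0∞) ^ q ∂μ) = ENNReal.ofReal (‖f‖ ^ q) := by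
    intro f
    have h1 : eLpNorm f p μ = (∫⁻ a, (‖f a‖₊ : ℝ≥0∞) ^ q ∂μ) ^ (1/q) := by
      rw [eLpNorm_eq_lintegral_rpow_enorm_toReal hp0 hpt, hptr]; rfl
    have hfin : eLpNorm f p μ ≠ ∞ := Lp.eLpNorm_ne_top f
    have h2 : (∫⁻ a, (‖f a‖₊ : ℝ≥0∞) ^ q ∂μ) = (eLpNorm f p μ) ^ q := by
      rw [h1, ← ENNReal.rpow_mul, one_div, inv_mul_cancel₀ hq0.ne', ENNReal.rpow_one]
    rw [h2, ← ENNReal.ofReal_toReal hfin,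
      ENNReal.ofReal_rpow_of_nonneg ENNReal.toReal_nonneg hq0.le, ← Lp.norm_def]
  apply Real.sSup_le _ (by positivity)
  rintro r ⟨x, y, hx, hy, rfl⟩
  have huy : ‖u • y‖ = u := by
    rw [norm_smul, hy, Real.norm_eq_abs, abs_of_pos hu0, mul_one]
  have hkey := clarkson_lintegral hq1 hq2
    (Lp.aestronglyMeasurable x).aemeasurable
    (Lp.aestronglyMeasurable (u • y : Lp ℝ p μ)).aemeasurable (μ := μ)
  have e1 : (∫⁻ a, (‖(x : Ω → ℝ) a + ((u • y : Lp ℝ p μ) : Ω → ℝ) a‖₊ : ℝ≥0∞) ^ q ∂μ)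
      = ENNReal.ofReal (‖x + u • y‖ ^ q) := by
    rw [← hJ (x + u • y)]
    apply lintegral_congr_ae
    filter_upwards [Lp.coeFn_add x (u • y)] with a ha
    rw [ha, Pi.add_apply]
  have e2 : (∫⁻ a, (‖(x : Ω → ℝ) a - ((u • y : Lp ℝ p μ) : Ω → ℝ) a‖₊ : ℝ≥0∞) ^ q ∂μ)
      = ENNReal.ofReal (‖x - u • y‖ ^ q) := by
    rw [← hJ (x - u • y)]
    apply lintegral_congr_ae
    filter_upwards [Lp.coeFn_sub x (u • y)] with a ha
    rw [ha, Pi.sub_apply]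
  rw [e1, e2, hJ x, hJ (u • y), hx, huy, Real.one_rpow] at hkey
  have hkey2 : ENNReal.ofReal (‖x + u • y‖ ^ q + ‖x - u • y‖ ^ q)
      ≤ ENNReal.ofReal (2 * (1 + u ^ q)) := by
    rw [ENNReal.ofReal_add (by positivity) (by positivity),
      ENNReal.ofReal_mul (by norm_num), ENNReal.ofReal_add (by norm_num) (by positivity)]
    simpa using hkey
  have hreal : ‖x + u • y‖ ^ q + ‖x - u • y‖ ^ q ≤ 2 * (1 + u ^ q) :=
    (ENNReal.ofReal_le_ofReal_iff (by positivity)).mp hkey2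
  exact final_arith hq1 hu0 (norm_nonneg _) (norm_nonneg _) hreal
end

section
/- Let X be a Banach space that is q-smooth, i.e. ρ(X,u) ≤ γ u^q with 1 < q ≤ 2, and let D_n be a normalized system (||g_j|| = 1) of n elements in X. Then the best m-term approximation of the octahedron A_1(D_n) = { Σ c_j g_j : Σ|c_j| ≤ 1 } satisfies σ_m(A_1(D_n), D_n)_X ≤ C(q,γ) m^{1/q - 1} for all m ≥ 1, where σ_m(f,D_n)_X = inf over choices of m indices Λ and coefficients of ||f - Σ_{j∈Λ} c_j g_j||, and σ_m over a class is the supremum over its elements. -/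
set_option maxHeartbeats 1000000


open scoped BigOperators

/-- Best `m`-term approximation of `f` with respect to the system `g`. -/
noncomputable def sigmaM {X : Type*} [NormedAddCommGroup X] [NormedSpace ℝ X] {n : ℕ}
    (g : Fin n → X) (m : ℕ) (f : X) : ℝ :=
  sInf {r : ℝ | ∃ (Λ : Finset (Fin n)) (c : Fin n → ℝ), Λ.card ≤ m ∧
    r = ‖f - ∑ j ∈ Λ, c j • g j‖}

lemma smooth_bound {q γ : ℝ} (hq0 : 0 < q) (hγ : 0 < γ)
    (X : Type) [NormedAddCommGroup X] [NormedSpace ℝ X]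
    (hρ : ∀ u : ℝ, 0 < u → modSmooth X u ≤ γ * u ^ q)
    (x y : X) (hx : x ≠ 0) :
    ‖x + y‖ + ‖x - y‖ ≤ 2 * ‖x‖ + 2 * γ * ‖y‖ ^ q * ‖x‖ ^ (1 - q) := by
  rcases eq_or_ne y 0 with rfl | hy
  · have : (0:ℝ) ≤ 2 * γ * ‖(0:X)‖ ^ q * ‖x‖ ^ (1 - q) := by
      positivity
    simp only [add_zero, sub_zero]
    linarith
  · have hxn : (0:ℝ) < ‖x‖ := norm_pos_iff.2 hx
    have hyn : (0:ℝ) < ‖y‖ := norm_pos_iff.2 hy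
    set u : ℝ := ‖y‖ / ‖x‖ with hu
    have hupos : 0 < u := div_pos hyn hxn
    -- membership
    have hmem : (‖x + y‖ + ‖x - y‖) / (2 * ‖x‖) - 1 ∈
        {r : ℝ | ∃ x' y' : X, ‖x'‖ = 1 ∧ ‖y'‖ = 1 ∧
          r = (‖x' + u • y'‖ + ‖x' - u • y'‖) / 2 - 1} := by
      refine ⟨‖x‖⁻¹ • x, ‖y‖⁻¹ • y, ?_, ?_, ?_⟩
      · rw [norm_smul, norm_inv, norm_norm, inv_mul_cancel₀ hxn.ne']
      · rw [norm_smul, norm_inv, norm_norm, inv_mul_cancel₀ hyn.ne']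
      · have hsm : u • ‖y‖⁻¹ • y = ‖x‖⁻¹ • y := by
          rw [smul_smul]
          congr 1
          rw [hu]
          field_simp
        rw [hsm, ← smul_add, ← smul_sub, norm_smul, norm_smul, norm_inv, norm_norm]
        field_simp
    have hbdd : BddAbove {r : ℝ | ∃ x' y' : X, ‖x'‖ = 1 ∧ ‖y'‖ = 1 ∧
        r = (‖x' + u • y'‖ + ‖x' - u • y'‖) / 2 - 1} := by
      refine ⟨u, ?_⟩
      rintro r ⟨x', y', hx', hy', rfl⟩
      have h1 : ‖x' + u • y'‖ ≤ 1 + u := by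
        calc ‖x' + u • y'‖ ≤ ‖x'‖ + ‖u • y'‖ := norm_add_le _ _
        _ = 1 + u := by rw [hx', norm_smul, hy', Real.norm_eq_abs, abs_of_pos hupos, mul_one]
      have h2 : ‖x' - u • y'‖ ≤ 1 + u := by
        calc ‖x' - u • y'‖ ≤ ‖x'‖ + ‖u • y'‖ := norm_sub_le _ _
        _ = 1 + u := by rw [hx', norm_smul, hy', Real.norm_eq_abs, abs_of_pos hupos, mul_one]
      simp only [Set.mem_setOf_eq] at *
      linarith
    have hle : (‖x + y‖ + ‖x - y‖) / (2 * ‖x‖) - 1 ≤ γ * u ^ q :=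
      le_trans (le_csSup hbdd hmem) (hρ u hupos)
    have huq : u ^ q = ‖y‖ ^ q * ‖x‖ ^ (-q) := by
      rw [hu, Real.div_rpow hyn.le hxn.le, Real.rpow_neg hxn.le, div_eq_mul_inv]
    have hx1q : ‖x‖ * ‖x‖ ^ (-q) = ‖x‖ ^ (1 - q) := by
      nth_rewrite 1 [← Real.rpow_one ‖x‖]
      rw [← Real.rpow_add hxn, ← sub_eq_add_neg]
    have h2x : (0:ℝ) < 2 * ‖x‖ := by linarith
    rw [div_sub_one h2x.ne', div_le_iff₀ h2x] at hle
    calc ‖x + y‖ + ‖x - y‖ = (‖x + y‖ + ‖x - y‖ - 2 * ‖x‖) + 2 * ‖x‖ := by ring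
    _ ≤ γ * u ^ q * (2 * ‖x‖) + 2 * ‖x‖ := by linarith
    _ = 2 * ‖x‖ + 2 * γ * ‖y‖ ^ q * (‖x‖ * ‖x‖ ^ (-q)) := by rw [huq]; ring
    _ = 2 * ‖x‖ + 2 * γ * ‖y‖ ^ q * ‖x‖ ^ (1 - q) := by rw [hx1q]

/-- If `X` is `q`-smooth (`ρ(X,u) ≤ γ u^q`, `1 < q ≤ 2`) and `D_n` is a
normalized system of `n` elements, then `σ_m(A_1(D_n), D_n)_X ≤ C(q,γ) m^{1/q - 1}`
for all `m ≥ 1`. -/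
theorem stmt6 (q γ : ℝ) (hq1 : 1 < q) (hq2 : q ≤ 2) (hγ : 0 < γ) :
    ∃ C > 0, ∀ (X : Type) [NormedAddCommGroup X] [NormedSpace ℝ X] [CompleteSpace X],
      (∀ u : ℝ, 0 < u → modSmooth X u ≤ γ * u ^ q) →
      ∀ (n : ℕ) (g : Fin n → X), (∀ j, ‖g j‖ = 1) →
      ∀ f : X, (∃ c : Fin n → ℝ, (∑ j, |c j|) ≤ 1 ∧ f = ∑ j, c j • g j) →
      ∀ m : ℕ, 1 ≤ m → sigmaM g m f ≤ C * (m : ℝ) ^ (1 / q - 1) := by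
  classical
  have hq0 : (0:ℝ) < q := lt_trans one_pos hq1
  have hq1' : (0:ℝ) < q - 1 := sub_pos.2 hq1
  set B : ℝ := max (2 ^ (2*q) * γ) (2 ^ q) with hB
  have h2q : (0:ℝ) < 2 ^ q := Real.rpow_pos_of_pos two_pos q
  have hBpos : (0:ℝ) < B := lt_of_lt_of_le h2q (le_max_right _ _)
  have hB2q : (2:ℝ) ^ q ≤ B := le_max_right _ _
  have hBγ : (2:ℝ) ^ (2*q) * γ ≤ B := le_max_left _ _
  have h2qge2 : (2:ℝ) ≤ 2 ^ q := by
    calc (2:ℝ) = 2 ^ (1:ℝ) := (Real.rpow_one 2).symm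
    _ ≤ 2 ^ q := Real.rpow_le_rpow_of_exponent_le one_le_two hq1.le
  have hB4 : (4:ℝ) ≤ 2 * B := by linarith
  set c : ℝ := (1/(2*B)) ^ (1/(q-1)) / 2 with hc
  have hcpos : 0 < c := by
    have := Real.rpow_pos_of_pos (show (0:ℝ) < 1/(2*B) by positivity) (1/(q-1))
    positivity
  set p : ℝ := q / (q-1) with hp
  have hppos : 0 < p := div_pos hq0 hq1'
  have hp1 : 1 ≤ p := by
    rw [hp, le_div_iff₀ hq1']; linarith
  refine ⟨(p*c) ^ (-(1/p)), Real.rpow_pos_of_pos (by positivity) _, ?_⟩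
  intro X _ _ _ hρ n g hg f hf m hm
  obtain ⟨co, hco1, hcof⟩ := hf
  have hf1 : ‖f‖ ≤ 1 := by
    rw [hcof]
    calc ‖∑ j, co j • g j‖ ≤ ∑ j, ‖co j • g j‖ := norm_sum_le _ _
    _ = ∑ j, |co j| := by
        apply Finset.sum_congr rfl; intro j _
        rw [norm_smul, hg j, Real.norm_eq_abs, mul_one]
    _ ≤ 1 := hco1
  -- main invariant
  have key : ∀ k : ℕ, ∃ (Λ : Finset (Fin n)) (cc : Fin n → ℝ),
      Λ.card ≤ k ∧ ‖f - ∑ j ∈ Λ, cc j • g j‖ ≤ 1 ∧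
      p * c * k * ‖f - ∑ j ∈ Λ, cc j • g j‖ ^ p ≤ 1 := by
    intro k
    induction k with
    | zero =>
      refine ⟨∅, 0, by simp, by simpa using hf1, by simp⟩
    | succ k ih =>
      obtain ⟨Λ, cc, hcard, h1, h2⟩ := ih
      set h : X := ∑ j ∈ Λ, cc j • g j with hh
      set a : ℝ := ‖f - h‖ with ha
      have ha0 : 0 ≤ a := norm_nonneg _
      rcases eq_or_lt_of_le ha0 with haz | hapos
      · exact ⟨Λ, cc, le_trans hcard (Nat.le_succ k),
          h1, by rw [← hh, ← ha, ← haz, Real.zero_rpow hppos.ne', mul_zero]; norm_num⟩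
      · -- a > 0
        have hen : f - h ≠ 0 := fun h0 => hapos.ne' (by rw [ha, h0, norm_zero])
        have hn : 0 < n := by
          rcases Nat.eq_zero_or_pos n with h0 | h0
          · subst h0
            exact absurd (by rw [hcof, hh, Finset.eq_empty_of_isEmpty Λ]; simp) hen
          · exact h0
        obtain ⟨F, hF1, hFe⟩ := exists_dual_vector ℝ (f - h) (norm_ne_zero_iff.2 hen)
        have hFe' : F (f - h) = a := by simpa using hFe
        have hFz : ∀ z : X, F z ≤ ‖z‖ := by
          intro z
          calc F z ≤ |F z| := le_abs_self _
          _ = ‖F z‖ := (Real.norm_eq_abs _).symm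
          _ ≤ ‖F‖ * ‖z‖ := F.le_opNorm z
          _ = ‖z‖ := by rw [hF1, one_mul]
        -- pick best dictionary element
        have hne : (Finset.univ : Finset (Fin n)).Nonempty := by
          rw [Finset.univ_nonempty_iff]
          exact Fin.pos_iff_nonempty.mp hn
        obtain ⟨j0, _, hj0⟩ := Finset.exists_max_image Finset.univ (fun j => |F (g j)|) hne
        set M : ℝ := |F (g j0)| with hM
        have hM0 : 0 ≤ M := abs_nonneg _
        set ε : ℝ := if F (g j0) < 0 then -1 else 1 with hε
        have hεabs : |ε| = 1 := by
          rw [hε]; split <;> norm_num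
        have hεF : ε * F (g j0) = M := by
          rw [hε, hM]
          split
          · rw [abs_of_neg (by assumption)]; ring
          · rw [abs_of_nonneg (le_of_not_gt (by assumption))]; ring
        have hFfM : F f ≤ M := by
          rw [hcof, map_sum]
          calc ∑ j, F (co j • g j) = ∑ j, co j * F (g j) := by
                apply Finset.sum_congr rfl; intro j _; rw [map_smul]; rfl
          _ ≤ ∑ j, |co j| * M := by
                apply Finset.sum_le_sum; intro j _
                calc co j * F (g j) ≤ |co j * F (g j)| := le_abs_self _
                _ = |co j| * |F (g j)| := abs_mul _ _
                _ ≤ |co j| * M := by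
                    exact mul_le_mul_of_nonneg_left (hj0 j (Finset.mem_univ j)) (abs_nonneg _)
          _ = (∑ j, |co j|) * M := (Finset.sum_mul _ _ _).symm
          _ ≤ 1 * M := mul_le_mul_of_nonneg_right hco1 hM0
          _ = M := one_mul M
        -- step size
        set θ : ℝ := (a ^ q / (2*B)) ^ (1/(q-1)) with hθ
        have haq1 : a ^ q ≤ 1 := Real.rpow_le_one ha0 h1 hq0.le
        have haqpos : 0 < a ^ q := Real.rpow_pos_of_pos hapos q
        have hθpos : 0 < θ := Real.rpow_pos_of_pos (by positivity) _
        have hθhalf : θ ≤ 1/2 := by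
          have hbase : a ^ q / (2*B) ≤ (1/2 : ℝ) ^ (q-1) := by
            have h14 : a ^ q / (2*B) ≤ 1/4 := by
              rw [div_le_iff₀ (by linarith only [hB4])]
              linarith only [haq1, hB4]
            have : ((1:ℝ)/2) ^ (1:ℝ) ≤ (1/2:ℝ) ^ (q-1) := by
              apply Real.rpow_le_rpow_of_exponent_ge (by norm_num) (by norm_num) (by linarith only [hq2])
            rw [Real.rpow_one] at this
            linarith only [this, h14]
          calc θ ≤ ((1/2 : ℝ) ^ (q-1)) ^ (1/(q-1)) := by
                apply Real.rpow_le_rpow (by positivity) hbase (by positivity)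
          _ = (1/2 : ℝ) := by
                rw [← Real.rpow_mul (by norm_num), mul_one_div, div_self hq1'.ne', Real.rpow_one]
        have hθq1 : θ ^ (q-1) = a ^ q / (2*B) := by
          rw [hθ, ← Real.rpow_mul (by positivity), one_div, inv_mul_cancel₀ hq1'.ne',
            Real.rpow_one]
        have hθca : θ = 2 * (c * a ^ p) := by
          rw [hθ, div_eq_mul_one_div (a^q) (2*B), Real.mul_rpow (by positivity) (by positivity),
            ← Real.rpow_mul ha0, hc, hp]
          rw [mul_one_div]
          ring
        -- new approximation
        set s : X := ε • g j0 with hs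
        set cc' : Fin n → ℝ := fun j => (1-θ) * (if j ∈ Λ then cc j else 0)
          + (if j = j0 then θ*ε else 0) with hcc'
        have hsum : ∑ j ∈ insert j0 Λ, cc' j • g j = (1-θ) • h + θ • s := by
          rw [hcc']
          simp only [add_smul, Finset.sum_add_distrib, ite_smul, zero_smul]
          congr 1
          · rw [hh, Finset.smul_sum]
            rw [← Finset.sum_subset (Finset.subset_insert j0 Λ) (by intro j _ hj; simp [hj])]
            apply Finset.sum_congr rfl
            intro j hj
            rw [if_pos hj, mul_smul]
          · rw [Finset.sum_ite_eq' (insert j0 Λ) j0 (fun j => (θ*ε) • g j)]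
            rw [if_pos (Finset.mem_insert_self j0 Λ), hs, mul_smul, smul_comm]
        -- error identity
        set x : X := (1-θ) • (f - h) with hx
        set y : X := θ • (f - s) with hy
        have herr : f - ∑ j ∈ insert j0 Λ, cc' j • g j = x + y := by
          rw [hsum, hx, hy]
          rw [smul_sub, smul_sub, sub_smul, sub_smul, one_smul, one_smul]
          abel
        have hθ1 : (0:ℝ) < 1 - θ := by linarith only [hθhalf]
        have hxne : x ≠ 0 := by
          rw [hx]
          exact smul_ne_zero hθ1.ne' hen
        have hxnorm : ‖x‖ = (1-θ) * a := by
          rw [hx, norm_smul, Real.norm_eq_abs, abs_of_pos hθ1, ha]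
        have hsnorm : ‖s‖ = 1 := by
          rw [hs, norm_smul, Real.norm_eq_abs, hεabs, hg j0, mul_one]
        have hynorm : ‖y‖ ≤ 2*θ := by
          rw [hy, norm_smul, Real.norm_eq_abs, abs_of_pos hθpos]
          have : ‖f - s‖ ≤ 2 := by
            calc ‖f - s‖ ≤ ‖f‖ + ‖s‖ := norm_sub_le _ _
            _ ≤ 2 := by rw [hsnorm]; linarith only [hf1]
          calc θ * ‖f - s‖ ≤ θ * 2 := mul_le_mul_of_nonneg_left this hθpos.le
          _ = 2 * θ := mul_comm _ _
        -- lower bound on ‖x - y‖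
        have hFs : F s = M := by rw [hs, map_smul, smul_eq_mul, hεF]
        have hlow : (1-θ) * a ≤ ‖x - y‖ := by
          have hfs' : F (f - s) = F f - M := by rw [map_sub, hFs]
          have hFxy : F (x - y) = (1-θ) * a - θ * (F f - M) := by
            rw [map_sub, hx, hy, map_smul, map_smul, smul_eq_mul, smul_eq_mul,
              hFe', hfs']
          have : (1-θ) * a ≤ F (x - y) := by
            rw [hFxy]
            have hnp : θ * (F f - M) ≤ 0 :=
              mul_nonpos_of_nonneg_of_nonpos hθpos.le (by linarith only [hFfM])
            linarith only [hnp]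
          exact le_trans this (hFz _)
        -- smoothness estimate
        have hsm := smooth_bound hq0 hγ X hρ x y hxne
        have haa : a ^ q * a ^ (1-q) = a := by
          rw [← Real.rpow_add hapos]
          norm_num
        have hterm : 2 * γ * ‖y‖ ^ q * ‖x‖ ^ (1-q) ≤ θ * a / 2 := by
          have hy1 : ‖y‖ ^ q ≤ (2*θ) ^ q :=
            Real.rpow_le_rpow (norm_nonneg _) hynorm hq0.le
          have hx1 : ‖x‖ ^ (1-q) ≤ (a/2) ^ (1-q) := by
            rw [hxnorm]
            have h' : (1:ℝ)/2 ≤ 1-θ := by linarith only [hθhalf]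
            have h'' : a/2 ≤ (1-θ)*a := by
              calc a/2 = (1/2)*a := by ring
              _ ≤ (1-θ)*a := mul_le_mul_of_nonneg_right h' ha0
            exact Real.rpow_le_rpow_of_nonpos (by positivity) h'' (by linarith only [hq1])
          have hstep1 : 2 * γ * ‖y‖ ^ q * ‖x‖ ^ (1-q) ≤ 2 * γ * (2*θ) ^ q * (a/2) ^ (1-q) := by
            have t1 : (0:ℝ) ≤ ‖x‖ ^ (1-q) := Real.rpow_nonneg (norm_nonneg _) _
            calc 2 * γ * ‖y‖ ^ q * ‖x‖ ^ (1-q) ≤ 2 * γ * (2*θ) ^ q * ‖x‖ ^ (1-q) :=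
                  mul_le_mul_of_nonneg_right
                    (mul_le_mul_of_nonneg_left hy1 (by positivity)) t1
            _ ≤ 2 * γ * (2*θ) ^ q * (a/2) ^ (1-q) :=
                  mul_le_mul_of_nonneg_left hx1 (by positivity)
          have hmr : (2*θ:ℝ) ^ q = 2 ^ q * θ ^ q :=
            Real.mul_rpow (by norm_num) hθpos.le
          have hdr : (a/2:ℝ) ^ (1-q) = a ^ (1-q) * 2 ^ (q-1) := by
            rw [Real.div_rpow ha0 (by norm_num), div_eq_mul_inv, ← Real.rpow_neg (by norm_num)]
            norm_num
          have h2mul : (2:ℝ) * 2 ^ q * 2 ^ (q-1) = 2 ^ (2*q) := by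
            nth_rewrite 1 [← Real.rpow_one 2]
            rw [← Real.rpow_add two_pos, ← Real.rpow_add two_pos]
            ring_nf
          have hθqsplit : θ ^ q = θ * (a ^ q / (2*B)) := by
            rw [← hθq1]
            nth_rewrite 1 [show q = 1 + (q-1) by ring]
            rw [Real.rpow_add hθpos, Real.rpow_one]
          have hstep2 : 2 * γ * (2*θ) ^ q * (a/2) ^ (1-q) = 2 ^ (2*q) * γ * (θ^q * a^(1-q)) := by
            rw [hmr, hdr, ← h2mul]
            ring
          have hθqa : (0:ℝ) ≤ θ^q * a^(1-q) := by positivity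
          have hstep3 : 2 ^ (2*q) * γ * (θ^q * a^(1-q)) ≤ B * (θ^q * a^(1-q)) :=
            mul_le_mul_of_nonneg_right hBγ hθqa
          have hstep4 : B * (θ^q * a^(1-q)) = θ * a / 2 := by
            rw [hθqsplit,
              show θ * (a ^ q / (2*B)) * a^(1-q) = θ * (a ^ q * a^(1-q)) / (2*B) from by ring,
              haa]
            field_simp
          linarith only [hstep1, hstep3, hstep2 ▸ hstep1, hstep4, hstep2, hstep3]
        have hnorm' : ‖x + y‖ ≤ (1 - θ/2) * a := by
          have h2x : 2*‖x‖ = 2*((1-θ)*a) := by rw [hxnorm]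
          linarith only [hsm, hterm, hlow, h2x]
        -- conclude the invariant
        refine ⟨insert j0 Λ, cc', ?_, ?_, ?_⟩
        · calc (insert j0 Λ).card ≤ Λ.card + 1 := Finset.card_insert_le _ _
          _ ≤ k + 1 := by omega
        · rw [herr]
          have hle1 : (1 - θ/2) * a ≤ 1 :=
            mul_le_one₀ (by linarith only [hθpos]) ha0 h1
          linarith only [hnorm', hle1]
        · rw [herr]
          -- Bernoulli step
          set xx : ℝ := c * a ^ p with hxx
          have hap1 : a ^ p ≤ 1 := Real.rpow_le_one ha0 h1 hppos.le
          have happos : 0 < a ^ p := Real.rpow_pos_of_pos hapos p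
          have hxx0 : 0 < xx := by positivity
          have hxx4 : xx ≤ 1/4 := by
            have h' : θ/2 = xx := by rw [hθca]; ring
            linarith only [h', hθhalf]
          have hD : (0:ℝ) < 1 + p * xx := by positivity
          have hxyb : ‖x + y‖ ≤ (1 - xx) * a := by
            have : (1 - θ/2) = 1 - xx := by rw [hθca]; ring
            rw [← this]
            exact hnorm'
          have hber : (1 - xx) ^ p ≤ (1 + p * xx)⁻¹ := by
            have h1x : (1 - xx : ℝ) ≤ (1 + xx)⁻¹ := by
              rw [inv_eq_one_div, le_div_iff₀ (by linarith only [hxx0])]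
              have hsq : (1 - xx) * (1 + xx) = 1 - xx^2 := by ring
              linarith only [hsq, sq_nonneg xx]
            calc (1 - xx) ^ p ≤ ((1 + xx)⁻¹) ^ p :=
                  Real.rpow_le_rpow (by linarith only [hxx0, hxx4]) h1x hppos.le
            _ = ((1 + xx) ^ p)⁻¹ := Real.inv_rpow (by linarith only [hxx0]) p
            _ ≤ (1 + p * xx)⁻¹ := by
                  apply inv_anti₀ hD
                  exact one_add_mul_self_le_rpow_one_add (by linarith only [hxx0]) hp1
          have hpow : ‖x + y‖ ^ p ≤ (1 + p * xx)⁻¹ * a ^ p := by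
            calc ‖x + y‖ ^ p ≤ ((1 - xx) * a) ^ p :=
                  Real.rpow_le_rpow (norm_nonneg _) hxyb hppos.le
            _ = (1 - xx) ^ p * a ^ p := Real.mul_rpow (by linarith only [hxx0, hxx4]) ha0
            _ ≤ (1 + p * xx)⁻¹ * a ^ p :=
                  mul_le_mul_of_nonneg_right hber happos.le
          have hfin : p * c * (k+1 : ℕ) * ((1 + p * xx)⁻¹ * a ^ p) ≤ 1 := by
            rw [mul_comm ((1 + p * xx)⁻¹) (a ^ p), ← mul_assoc]
            rw [← le_div_iff₀ (by positivity), one_div, inv_inv]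
            have : p * c * ((k:ℝ)+1) * a ^ p = p * c * (k:ℝ) * a ^ p + p * xx := by
              rw [hxx]; ring
            push_cast
            rw [this]
            linarith only [h2, hxx0, hppos]
          calc p * c * (k+1 : ℕ) * ‖x + y‖ ^ p
              ≤ p * c * (k+1 : ℕ) * ((1 + p * xx)⁻¹ * a ^ p) := by
                apply mul_le_mul_of_nonneg_left hpow
                positivity
          _ ≤ 1 := hfin
  obtain ⟨Λ, cc, hcard, h1, h2⟩ := key m
  set r : ℝ := ‖f - ∑ j ∈ Λ, cc j • g j‖ with hr
  have hr0 : 0 ≤ r := norm_nonneg _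
  have hm0 : (0:ℝ) < m := by exact_mod_cast hm
  have hpcm : 0 < p * c * (m:ℝ) := by positivity
  have hrp : r ^ p ≤ (p * c * (m:ℝ))⁻¹ := by
    rw [inv_eq_one_div, le_div_iff₀ hpcm]
    calc r ^ p * (p * c * (m:ℝ)) = p * c * (m:ℝ) * r ^ p := by ring
    _ ≤ 1 := h2
  have hrle : r ≤ (p*c) ^ (-(1/p)) * (m:ℝ) ^ (-(1/p)) := by
    have hid : r = (r ^ p) ^ (1/p) := by
      rw [← Real.rpow_mul hr0, mul_one_div, div_self hppos.ne', Real.rpow_one]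
    calc r = (r ^ p) ^ (1/p) := hid
    _ ≤ ((p * c * (m:ℝ))⁻¹) ^ (1/p) :=
        Real.rpow_le_rpow (Real.rpow_nonneg hr0 p) hrp (by positivity)
    _ = (p * c * (m:ℝ)) ^ (-(1/p)) := by
        rw [Real.inv_rpow hpcm.le, ← Real.rpow_neg hpcm.le]
    _ = (p*c) ^ (-(1/p)) * (m:ℝ) ^ (-(1/p)) :=
        Real.mul_rpow (by positivity) (by positivity)
  have hexp : -(1/p) = 1/q - 1 := by
    rw [hp]
    field_simp
    ring
  have hbdd : BddBelow {r : ℝ | ∃ (Λ : Finset (Fin n)) (c : Fin n → ℝ), Λ.card ≤ m ∧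
      r = ‖f - ∑ j ∈ Λ, c j • g j‖} := by
    refine ⟨0, ?_⟩
    rintro s ⟨Λ', c', _, rfl⟩
    exact norm_nonneg _
  have hmem : r ∈ {r : ℝ | ∃ (Λ : Finset (Fin n)) (c : Fin n → ℝ), Λ.card ≤ m ∧
      r = ‖f - ∑ j ∈ Λ, c j • g j‖} := ⟨Λ, cc, hcard, hr⟩
  calc sigmaM g m f ≤ r := csInf_le hbdd hmem
  _ ≤ (p*c) ^ (-(1/p)) * (m:ℝ) ^ (-(1/p)) := hrle
  _ = (p*c) ^ (-(1/p)) * (m:ℝ) ^ (1/q - 1) := by rw [hexp]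
end

section
/- Let X be a Banach space with modulus of smoothness ρ(X,u) ≤ γ u^q for some 1 < q ≤ 2, and let D_n be a normalized system of n elements in X. Then the entropy numbers of the octahedron A_1(D_n) = { Σ c_j g_j : Σ |c_j| ≤ 1 } satisfy ε_k(A_1(D_n), X) ≤ C(q,γ) ( log(2n/k)/k )^{1 - 1/q} for k = 1,...,n. -/
open scoped BigOperators

/-- The `k`-th dyadic entropy number of a set `W` in a normed space. -/
noncomputable def entropyNum {X : Type*} [NormedAddCommGroup X] (W : Set X) (k : ℕ) : ℝ :=
  sInf {ε : ℝ | 0 < ε ∧ ∃ y : Fin (2 ^ k) → X, ∀ w ∈ W, ∃ j, ‖w - y j‖ ≤ ε}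


lemma aux_pow_le_factorial (m : ℕ) : (m : ℝ) ^ m ≤ 4 ^ m * m.factorial := by
  induction m with
  | zero => simp
  | succ m ih =>
    have key : ((m:ℝ) + 1) ^ m ≤ 4 * (m:ℝ) ^ m := by
      rcases Nat.eq_zero_or_pos m with hm | hm
      · subst hm; norm_num
      · have hm0 : (0:ℝ) < m := by exact_mod_cast hm
        have h12 : ((m:ℝ) + 1) ^ m = (1 + 1/(m:ℝ)) ^ m * (m:ℝ) ^ m := by
          rw [← mul_pow]; congr 1; field_simp
        have h3 : (1 + 1/(m:ℝ)) ^ m ≤ Real.exp (1/m) ^ m := by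
          apply pow_le_pow_left₀ (by positivity)
          linarith [Real.add_one_le_exp (1/(m:ℝ))]
        have h4 : Real.exp (1/(m:ℝ)) ^ m = Real.exp 1 := by
          rw [← Real.exp_nat_mul]
          congr 1
          field_simp
        have h5 : Real.exp 1 ≤ 4 := by
          have := Real.exp_one_lt_d9
          linarith
        calc ((m:ℝ) + 1) ^ m = (1 + 1/(m:ℝ)) ^ m * (m:ℝ) ^ m := h12
          _ ≤ Real.exp 1 * (m:ℝ) ^ m := by
              apply mul_le_mul_of_nonneg_right _ (by positivity)
              rw [← h4]; exact h3
          _ ≤ 4 * (m:ℝ) ^ m := by nlinarith [pow_nonneg (le_of_lt hm0) m]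
    have : ((m:ℝ) + 1) ^ (m+1) = ((m:ℝ)+1)^m * ((m:ℝ)+1) := by ring
    push_cast
    rw [this]
    have hfac : (0:ℝ) ≤ (m.factorial : ℝ) := by positivity
    calc ((m:ℝ)+1)^m * ((m:ℝ)+1) ≤ (4 * (m:ℝ)^m) * ((m:ℝ)+1) := by
          apply mul_le_mul_of_nonneg_right key (by positivity)
      _ ≤ (4 * (4^m * m.factorial)) * ((m:ℝ)+1) := by
          apply mul_le_mul_of_nonneg_right _ (by positivity)
          apply mul_le_mul_of_nonneg_left ih (by norm_num)
      _ = 4^(m+1) * (m.factorial * ((m:ℝ)+1)) := by ring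
      _ = 4^(m+1) * ((m+1).factorial) := by
          rw [Nat.factorial_succ]; push_cast; ring


lemma smooth_key {X : Type} [NormedAddCommGroup X] [NormedSpace ℝ X]
    (q γ : ℝ) (hq0 : 0 < q) (hγ : 0 < γ)
    (hsm : ∀ u : ℝ, 0 < u → modSmooth X u ≤ γ * u ^ q)
    (x y : X) (hx : x ≠ 0) (hy : y ≠ 0) :
    ‖x + y‖ + ‖x - y‖ ≤ 2*‖x‖ + 2*γ*‖x‖*(‖y‖/‖x‖)^q := by
  have hxn : (0:ℝ) < ‖x‖ := norm_pos_iff.2 hx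
  have hyn : (0:ℝ) < ‖y‖ := norm_pos_iff.2 hy
  set u : ℝ := ‖y‖/‖x‖ with hu
  have hupos : 0 < u := by positivity
  set x' : X := ‖x‖⁻¹ • x with hx'
  set y' : X := ‖y‖⁻¹ • y with hy'
  have hx'n : ‖x'‖ = 1 := norm_smul_inv_norm hx
  have hy'n : ‖y'‖ = 1 := norm_smul_inv_norm hy
  have hid1 : x' + u • y' = ‖x‖⁻¹ • (x + y) := by
    rw [hx', hy', smul_add, smul_smul]
    congr 2
    rw [hu]; field_simp
  have hid2 : x' - u • y' = ‖x‖⁻¹ • (x - y) := by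
    rw [hx', hy', smul_sub, smul_smul]
    congr 2
    rw [hu]; field_simp
  have hmem : (‖x' + u • y'‖ + ‖x' - u • y'‖) / 2 - 1 ∈
      {r : ℝ | ∃ a b : X, ‖a‖ = 1 ∧ ‖b‖ = 1 ∧ r = (‖a + u • b‖ + ‖a - u • b‖) / 2 - 1} :=
    ⟨x', y', hx'n, hy'n, rfl⟩
  have hbdd : BddAbove {r : ℝ | ∃ a b : X, ‖a‖ = 1 ∧ ‖b‖ = 1 ∧ r = (‖a + u • b‖ + ‖a - u • b‖) / 2 - 1} := by
    refine ⟨u, ?_⟩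
    rintro r ⟨a, b, ha, hb, rfl⟩
    have h1 : ‖a + u • b‖ ≤ 1 + u := by
      calc ‖a + u • b‖ ≤ ‖a‖ + ‖u • b‖ := norm_add_le _ _
        _ = 1 + u := by rw [ha, norm_smul, hb, Real.norm_eq_abs, abs_of_pos hupos, mul_one]
    have h2 : ‖a - u • b‖ ≤ 1 + u := by
      calc ‖a - u • b‖ ≤ ‖a‖ + ‖u • b‖ := norm_sub_le _ _
        _ = 1 + u := by rw [ha, norm_smul, hb, Real.norm_eq_abs, abs_of_pos hupos, mul_one]
    linarith
  have hle : (‖x' + u • y'‖ + ‖x' - u • y'‖) / 2 - 1 ≤ γ * u ^ q := by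
    calc (‖x' + u • y'‖ + ‖x' - u • y'‖) / 2 - 1 ≤ modSmooth X u := le_csSup hbdd hmem
      _ ≤ γ * u ^ q := hsm u hupos
  rw [hid1, hid2, norm_smul, norm_smul, Real.norm_eq_abs, abs_of_pos (by positivity : (0:ℝ) < ‖x‖⁻¹)] at hle
  have h2 : ‖x‖⁻¹ * ‖x + y‖ + ‖x‖⁻¹ * ‖x - y‖ ≤ 2 + 2 * (γ * u ^ q) := by linarith
  have h3 := mul_le_mul_of_nonneg_left h2 (le_of_lt hxn)
  calc ‖x + y‖ + ‖x - y‖ = ‖x‖ * (‖x‖⁻¹ * ‖x + y‖ + ‖x‖⁻¹ * ‖x - y‖) := by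
        field_simp
    _ ≤ ‖x‖ * (2 + 2 * (γ * u ^ q)) := h3
    _ = 2*‖x‖ + 2*γ*‖x‖*u^q := by ring

noncomputable def psiMap {X : Type} [NormedAddCommGroup X] {n : ℕ} (g : Fin n → X) :
    Option (Fin n × Bool) → X
  | none => 0
  | some (j, true) => g j
  | some (j, false) => -g j

lemma psiMap_norm_le {X : Type} [NormedAddCommGroup X] {n : ℕ} (g : Fin n → X)
    (hg : ∀ j, ‖g j‖ = 1) (o : Option (Fin n × Bool)) : ‖psiMap g o‖ ≤ 1 := by
  rcases o with _ | ⟨j, b⟩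
  · simp [psiMap]
  · rcases b with _ | _ <;> simp [psiMap, hg]


lemma greedy_lemma {X : Type} [NormedAddCommGroup X] [NormedSpace ℝ X] [CompleteSpace X]
    (q γ : ℝ) (hq1 : 1 < q) (hq2 : q ≤ 2) (hγ : 0 < γ)
    (hsm : ∀ u : ℝ, 0 < u → modSmooth X u ≤ γ * u ^ q)
    {n : ℕ} (hn : 0 < n) (g : Fin n → X) (hg : ∀ j, ‖g j‖ = 1)
    (c : Fin n → ℝ) (hc : (∑ j, |c j|) ≤ 1) (m : ℕ) :
    ∃ l : List (Option (Fin n × Bool)), l.length = m ∧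
      ‖(l.map (psiMap g)).sum - (m:ℝ) • (∑ j, c j • g j)‖ ^ q
        ≤ (max (((8*γ)^(1/q)+3)^q) (24*γ)) * m := by
  have hq0 : (0:ℝ) < q := lt_trans one_pos hq1
  set f : X := ∑ j, c j • g j with hf
  set c8 : ℝ := 8*γ with hc8
  have hc8pos : 0 < c8 := by positivity
  set B : ℝ := max ((c8^(1/q)+3)^q) (24*γ) with hB
  have hBpos : 0 < B := lt_of_lt_of_le (by positivity) (le_max_right _ _)
  have hfle : ‖f‖ ≤ 1 := by
    calc ‖f‖ ≤ ∑ j, ‖c j • g j‖ := norm_sum_le _ _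
      _ = ∑ j, |c j| := by
          apply Finset.sum_congr rfl
          intro j _
          rw [norm_smul, hg, Real.norm_eq_abs, mul_one]
      _ ≤ 1 := hc
  induction m with
  | zero =>
    refine ⟨[], rfl, ?_⟩
    simp [Real.zero_rpow (ne_of_gt hq0)]
  | succ m ih =>
    obtain ⟨l, hl, hb⟩ := ih
    set s : X := (l.map (psiMap g)).sum - (m:ℝ) • f with hs
    set t : ℝ := ‖s‖ with ht
    have htnn : 0 ≤ t := norm_nonneg _
    have hbnn : 0 ≤ B * m := by positivity
    have hBm : B * m + B = B * (m+1 : ℕ) := by push_cast; ring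
    have hsum_succ : ∀ o : Option (Fin n × Bool),
        ((o :: l).map (psiMap g)).sum - ((m+1 : ℕ):ℝ) • f = s + (psiMap g o - f) := by
      intro o
      rw [hs]
      push_cast
      rw [add_smul, one_smul]
      simp only [List.map_cons, List.sum_cons]
      abel
    by_cases hsmall : t ≤ c8^(1/q)
    · refine ⟨none :: l, by simp [hl], ?_⟩
      rw [hsum_succ none]
      have h1 : ‖s + (psiMap g none - f)‖ ≤ c8^(1/q) + 3 := by
        have : psiMap g none = (0:X) := rfl
        rw [this, zero_sub]
        calc ‖s + -f‖ ≤ ‖s‖ + ‖-f‖ := norm_add_le _ _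
          _ = ‖s‖ + ‖f‖ := by rw [norm_neg]
          _ ≤ c8^(1/q) + 3 := by linarith
      calc ‖s + (psiMap g none - f)‖ ^ q ≤ (c8^(1/q) + 3) ^ q := by
            apply Real.rpow_le_rpow (norm_nonneg _) h1 (le_of_lt hq0)
        _ ≤ B := le_max_left _ _
        _ ≤ B * (m+1 : ℕ) := by
            rw [← hBm]; linarith
    · push_neg at hsmall
      have ht0 : 0 < t := lt_of_le_of_lt (by positivity : (0:ℝ) ≤ c8^(1/q)) hsmall
      have hs0 : s ≠ 0 := by
        intro h
        rw [ht, h, norm_zero] at ht0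
        exact lt_irrefl _ ht0
      obtain ⟨F, hF1, hFs⟩ := exists_dual_vector ℝ s (norm_ne_zero_iff.mpr hs0)
      have hFs' : F s = t := by exact_mod_cast hFs
      have hFle : ∀ z : X, F z ≤ ‖z‖ := by
        intro z
        calc F z ≤ |F z| := le_abs_self _
          _ = ‖F z‖ := (Real.norm_eq_abs _).symm
          _ ≤ ‖F‖ * ‖z‖ := F.le_opNorm z
          _ = ‖z‖ := by rw [hF1, one_mul]
      have : Nonempty (Fin n) := ⟨⟨0, hn⟩⟩
      obtain ⟨j0, _, hj0⟩ := Finset.exists_max_image Finset.univ (fun j => |F (g j)|)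
        Finset.univ_nonempty
      set M : ℝ := |F (g j0)| with hM
      have hMnn : 0 ≤ M := abs_nonneg _
      have hFf : -M ≤ F f := by
        have h1 : F f = ∑ j, c j * F (g j) := by
          rw [hf, map_sum]
          apply Finset.sum_congr rfl
          intro j _
          simp
        have h2 : |F f| ≤ M := by
          rw [h1]
          calc |∑ j, c j * F (g j)| ≤ ∑ j, |c j * F (g j)| := Finset.abs_sum_le_sum_abs _ _
            _ ≤ ∑ j, |c j| * M := by
                apply Finset.sum_le_sum
                intro j _
                rw [abs_mul]
                exact mul_le_mul_of_nonneg_left (hj0 j (Finset.mem_univ j)) (abs_nonneg _)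
            _ = (∑ j, |c j|) * M := by rw [Finset.sum_mul]
            _ ≤ 1 * M := mul_le_mul_of_nonneg_right hc hMnn
            _ = M := one_mul M
        linarith [neg_abs_le (F f)]
      have hchoice : ∃ o : Option (Fin n × Bool), F (psiMap g o) ≤ F f := by
        rcases le_or_gt 0 (F (g j0)) with h | h
        · refine ⟨some (j0, false), ?_⟩
          have : psiMap g (some (j0, false)) = -g j0 := rfl
          rw [this, map_neg]
          have : F (g j0) = M := by rw [hM, abs_of_nonneg h]
          rw [this]; linarith
        · refine ⟨some (j0, true), ?_⟩
          have : psiMap g (some (j0, true)) = g j0 := rfl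
          rw [this]
          have : F (g j0) = -M := by rw [hM, abs_of_neg h]; ring
          rw [this]; linarith
      obtain ⟨o, ho⟩ := hchoice
      refine ⟨o :: l, by simp [hl], ?_⟩
      rw [hsum_succ o]
      set y : X := psiMap g o - f with hy
      have hy2 : ‖y‖ ≤ 2 := by
        calc ‖y‖ ≤ ‖psiMap g o‖ + ‖f‖ := norm_sub_le _ _
          _ ≤ 2 := by linarith [psiMap_norm_le g hg o]
      by_cases hy0 : y = 0
      · rw [hy0, add_zero]
        rw [← hBm]
        exact le_trans hb (by linarith)
      · -- main smoothness step
        have hkey := smooth_key q γ hq0 hγ hsm s y hs0 hy0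
        have hFy : F y ≤ 0 := by
          rw [hy, map_sub]
          linarith
        have hsy : t ≤ ‖s - y‖ := by
          have h := hFle (s - y)
          rw [map_sub, hFs'] at h
          linarith
        have h1 : ‖s + y‖ ≤ t + 2*γ*t*(‖y‖/t)^q := by linarith
        have htq : 0 < t^q := Real.rpow_pos_of_pos ht0 q
        have hyq : (‖y‖/t)^q ≤ 4 / t^q := by
          have ha : (‖y‖/t)^q ≤ (2/t)^q := by
            refine Real.rpow_le_rpow (by positivity) ?_ (le_of_lt hq0)
            gcongr
          have hb2 : (2/t)^q = 2^q / t^q := Real.div_rpow (by norm_num) htnn q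
          have hc2 : (2:ℝ)^q ≤ 4 := by
            have h4 : (2:ℝ)^(2:ℝ) = 4 := by
              rw [Real.rpow_two]; norm_num
            calc (2:ℝ)^q ≤ (2:ℝ)^(2:ℝ) := Real.rpow_le_rpow_of_exponent_le one_le_two hq2
              _ = 4 := h4
          calc (‖y‖/t)^q ≤ (2:ℝ)^q / t^q := by rw [← hb2]; exact ha
            _ ≤ 4 / t^q := by gcongr
        have h2 : ‖s + y‖ ≤ t * (1 + c8/t^q) := by
          have hmul : 2*γ*t*(‖y‖/t)^q ≤ 2*γ*t*(4/t^q) := by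
            apply mul_le_mul_of_nonneg_left hyq (by positivity)
          have heq : t + 2*γ*t*(4/t^q) = t * (1 + c8/t^q) := by
            rw [hc8]; field_simp; ring
          linarith
        have hlt : c8 < t^q := by
          have h := Real.rpow_lt_rpow (Real.rpow_nonneg (le_of_lt hc8pos) (1/q)) hsmall hq0
          rwa [← Real.rpow_mul (le_of_lt hc8pos), one_div, inv_mul_cancel₀ (ne_of_gt hq0),
            Real.rpow_one] at h
        have hu1 : c8/t^q ≤ 1 := (div_le_one htq).2 hlt.le
        set u : ℝ := c8/t^q with hudef
        have hu0 : 0 ≤ u := by positivity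
        have final : ‖s + y‖^q ≤ t^q + 3*c8 := by
          have e1 : ‖s + y‖^q ≤ (t*(1+u))^q :=
            Real.rpow_le_rpow (norm_nonneg _) h2 (le_of_lt hq0)
          have e2 : (t*(1+u))^q = t^q * (1+u)^q := Real.mul_rpow htnn (by positivity)
          have e3 : (1+u)^q ≤ (1+u)^(2:ℝ) :=
            Real.rpow_le_rpow_of_exponent_le (by linarith) hq2
          have e4 : (1+u)^(2:ℝ) = (1+u)*(1+u) := by
            rw [Real.rpow_two]; ring
          have e5 : (1+u)*(1+u) ≤ 1 + 3*u := by
            have hsq : u*u ≤ u := by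
              calc u*u ≤ 1*u := mul_le_mul_of_nonneg_right hu1 hu0
                _ = u := one_mul u
            have expand : (1+u)*(1+u) = 1+2*u+u*u := by ring
            rw [expand]
            linarith
          have e6 : t^q * (1 + 3*u) = t^q + 3*c8 := by
            have h : t^q * u = c8 := by rw [hudef]; field_simp
            calc t^q * (1 + 3*u) = t^q + 3*(t^q*u) := by ring
              _ = t^q + 3*c8 := by rw [h]
          calc ‖s + y‖^q ≤ t^q * (1+u)^q := by rw [← e2]; exact e1
            _ ≤ t^q * (1 + 3*u) := by
                apply mul_le_mul_of_nonneg_left _ (le_of_lt htq)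
                calc (1+u)^q ≤ (1+u)^(2:ℝ) := e3
                  _ = (1+u)*(1+u) := e4
                  _ ≤ 1 + 3*u := e5
            _ = t^q + 3*c8 := e6
        have h3c : 3*c8 ≤ B := by
          rw [hB, hc8]
          have : (3:ℝ)*(8*γ) = 24*γ := by ring
          rw [this]
          exact le_max_right _ _
        rw [← hBm]
        linarith

lemma entropyNum_le {X : Type} [NormedAddCommGroup X] (W : Set X) (k : ℕ) {ε δ : ℝ}
    (hε : 0 < ε) (hεδ : ε ≤ δ) (y : Fin (2^k) → X) (hy : ∀ w ∈ W, ∃ j, ‖w - y j‖ ≤ ε) :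
    entropyNum W k ≤ δ :=
  le_trans (csInf_le ⟨0, fun _ hx => le_of_lt hx.1⟩ ⟨hε, y, hy⟩) hεδ


/-- If `X` is `q`-smooth (`ρ(X,u) ≤ γ u^q`, `1 < q ≤ 2`) and `D_n` is a
normalized system of `n` elements, then the entropy numbers of the octahedron
`A_1(D_n)` satisfy `ε_k(A_1(D_n), X) ≤ C(q,γ) (log₂(2n/k)/k)^{1 - 1/q}` for
`k = 1,...,n`. -/
theorem stmt8 (q γ : ℝ) (hq1 : 1 < q) (hq2 : q ≤ 2) (hγ : 0 < γ) :
    ∃ C > 0, ∀ (X : Type) [NormedAddCommGroup X] [NormedSpace ℝ X] [CompleteSpace X],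
      (∀ u : ℝ, 0 < u → modSmooth X u ≤ γ * u ^ q) →
      ∀ (n : ℕ) (g : Fin n → X), (∀ j, ‖g j‖ = 1) →
      ∀ k : ℕ, 1 ≤ k → k ≤ n →
      entropyNum {f : X | ∃ c : Fin n → ℝ, (∑ j, |c j|) ≤ 1 ∧ f = ∑ j, c j • g j} k
        ≤ C * (Real.logb 2 (2 * n / k) / k) ^ (1 - 1 / q) := by
  classical
  have hq0 : (0:ℝ) < q := lt_trans one_pos hq1
  set B : ℝ := max (((8*γ)^(1/q)+3)^q) (24*γ) with hB
  have hBpos : 0 < B := lt_of_lt_of_le (by positivity) (le_max_right _ _)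
  have hBq : 0 < B^(1/q) := Real.rpow_pos_of_pos hBpos _
  set C : ℝ := 32 * (B^(1/q) + 1) with hC
  have hCpos : 0 < C := by rw [hC]; positivity
  refine ⟨C, hCpos, ?_⟩
  intro X _ _ _ hsm n g hg k hk1 hkn
  set e : ℝ := 1 - 1/q with he
  have hqinv : 0 < 1/q := by positivity
  have hqinv1 : 1/q < 1 := by rw [div_lt_one hq0]; exact hq1
  have he0 : 0 < e := by rw [he]; linarith
  have he1 : e ≤ 1 := by rw [he]; linarith
  have hn : 0 < n := lt_of_lt_of_le hk1 hkn
  have hk0 : (0:ℝ) < (k:ℝ) := by exact_mod_cast hk1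
  have hn0 : (0:ℝ) < (n:ℝ) := by exact_mod_cast hn
  have hkn' : (k:ℝ) ≤ n := by exact_mod_cast hkn
  have hratpos : (0:ℝ) < 2*(n:ℝ)/(k:ℝ) := by positivity
  have hnk2 : (2:ℝ) ≤ 2*(n:ℝ)/(k:ℝ) := by
    rw [le_div_iff₀ hk0]; linarith
  set L : ℝ := Real.logb 2 (2*(n:ℝ)/(k:ℝ)) with hL
  have hL1 : 1 ≤ L := by
    rw [hL, Real.le_logb_iff_rpow_le one_lt_two hratpos, Real.rpow_one]
    exact hnk2
  have hLpos : 0 < L := lt_of_lt_of_le one_pos hL1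
  have h2L : (2:ℝ)^L = 2*(n:ℝ)/(k:ℝ) := Real.rpow_logb two_pos (by norm_num) hratpos
  have hLke : (0:ℝ) ≤ (L/(k:ℝ))^e := Real.rpow_nonneg (by positivity) e
  -- the set is contained in the unit ball
  have hWball : ∀ c : Fin n → ℝ, (∑ j, |c j|) ≤ 1 → ‖∑ j, c j • g j‖ ≤ 1 := by
    intro c hc
    calc ‖∑ j, c j • g j‖ ≤ ∑ j, ‖c j • g j‖ := norm_sum_le _ _
      _ = ∑ j, |c j| := by
          apply Finset.sum_congr rfl
          intro j _
          rw [norm_smul, hg, Real.norm_eq_abs, mul_one]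
      _ ≤ 1 := hc
  rcases lt_or_ge (k:ℝ) (16*L) with hcase | hcase
  · -- small k: trivial covering by one ball of radius 1
    apply entropyNum_le _ k one_pos _ (fun _ => (0:X))
    · intro w hw
      obtain ⟨c, hc, rfl⟩ := hw
      refine ⟨⟨0, Nat.two_pow_pos k⟩, ?_⟩
      rw [sub_zero]
      exact hWball c hc
    · -- 1 ≤ C * (L/k)^e
      have ha : (1:ℝ)/16 ≤ L/(k:ℝ) := by
        rw [div_le_div_iff₀ (by norm_num) hk0]; linarith
      have ha2 : ((1:ℝ)/16)^e ≤ (L/(k:ℝ))^e := Real.rpow_le_rpow (by norm_num) ha he0.le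
      have ha3 : (1:ℝ)/16 ≤ ((1:ℝ)/16)^e := by
        have h := Real.rpow_le_rpow_of_exponent_ge (by norm_num : (0:ℝ) < 1/16)
          (by norm_num : (1:ℝ)/16 ≤ 1) he1
        rwa [Real.rpow_one] at h
      calc (1:ℝ) ≤ C * (1/16) := by rw [hC]; linarith [hBq]
        _ ≤ C * (L/(k:ℝ))^e := by
            apply mul_le_mul_of_nonneg_left _ hCpos.le
            linarith
  · -- main case
    set x0 : ℝ := (k:ℝ)/(16*L) with hx0
    have hx1 : 1 ≤ x0 := by
      rw [hx0, le_div_iff₀ (by positivity)]; linarith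
    set m : ℕ := ⌊x0⌋₊ with hm
    have hm1 : 1 ≤ m := Nat.le_floor (by exact_mod_cast hx1)
    have hm0 : (0:ℝ) < m := by exact_mod_cast hm1
    have hmub : (m:ℝ) ≤ x0 := Nat.floor_le (by positivity)
    have hmlb : x0/2 ≤ m := by
      rcases le_or_gt 2 x0 with h | h
      · have := Nat.lt_floor_add_one x0
        rw [← hm] at this
        linarith
      · have h1 : (1:ℝ) ≤ (m:ℝ) := by exact_mod_cast hm1
        linarith
    have hmn : (m:ℝ) ≤ n := by
      have hx0k : x0 ≤ (k:ℝ) := by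
        rw [hx0]; apply div_le_self hk0.le; linarith
      linarith
    -- cardinality of the net
    have hcn : Fintype.card (Sym (Option (Fin n × Bool)) m) = (2*n+m).choose m := by
      rw [Sym.card_sym_eq_multichoose, Nat.multichoose_eq]
      congr 1
      simp only [Fintype.card_option, Fintype.card_prod, Fintype.card_fin, Fintype.card_bool]
      omega
    have hfac : (0:ℝ) < (m.factorial : ℝ) := by exact_mod_cast Nat.factorial_pos m
    have hmm : (0:ℝ) < (m:ℝ)^m := by positivity
    have hcard1 : ((2*n+m).choose m : ℝ) ≤ (12*(n:ℝ)/m)^m := by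
      have h1 : ((2*n+m).choose m : ℝ) ≤ ((2*n+m : ℕ):ℝ)^m / m.factorial :=
        Nat.choose_le_pow_div m (2*n+m)
      have h2 : ((2*n+m : ℕ):ℝ) ≤ 3*(n:ℝ) := by push_cast; linarith
      have h3 : ((2*n+m : ℕ):ℝ)^m ≤ (3*(n:ℝ))^m :=
        pow_le_pow_left₀ (by positivity) h2 m
      have h6 : (3*(n:ℝ))^m / m.factorial ≤ (3*(n:ℝ))^m * 4^m / (m:ℝ)^m := by
        rw [div_le_div_iff₀ hfac hmm]
        calc (3*(n:ℝ))^m * (m:ℝ)^m ≤ (3*(n:ℝ))^m * (4^m * m.factorial) := by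
              apply mul_le_mul_of_nonneg_left (aux_pow_le_factorial m) (by positivity)
          _ = (3*(n:ℝ))^m * 4^m * m.factorial := by ring
      have h7 : (3*(n:ℝ))^m * 4^m / (m:ℝ)^m = (12*(n:ℝ)/m)^m := by
        rw [← mul_pow, div_pow]
        congr 2
        ring
      calc ((2*n+m).choose m : ℝ) ≤ ((2*n+m : ℕ):ℝ)^m / m.factorial := h1
        _ ≤ (3*(n:ℝ))^m / m.factorial := by gcongr
        _ ≤ (3*(n:ℝ))^m * 4^m / (m:ℝ)^m := h6
        _ = (12*(n:ℝ)/m)^m := h7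
    have h12 : 12*(n:ℝ)/m ≤ (2:ℝ)^(10*L) := by
      have hx02 : x0/2 = (k:ℝ)/(32*L) := by rw [hx0]; ring
      have hmlb' : (k:ℝ)/(32*L) ≤ m := by rw [← hx02]; exact hmlb
      have hstep1 : 12*(n:ℝ)/m ≤ 12*(n:ℝ)/((k:ℝ)/(32*L)) := by
        apply div_le_div_of_nonneg_left (by positivity) (by positivity) hmlb'
      have hstep2 : 12*(n:ℝ)/((k:ℝ)/(32*L)) = 192*L*(2*(n:ℝ)/(k:ℝ)) := by
        field_simp
        ring
      have e9 : (2:ℝ)^(9*L) = (512:ℝ)^L := by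
        rw [Real.rpow_mul (by norm_num : (0:ℝ) ≤ 2)]
        congr 1
        rw [show (9:ℝ) = ((9:ℕ):ℝ) by norm_num, Real.rpow_natCast]
        norm_num
      have hlog : (1:ℝ) ≤ Real.log 512 := by
        rw [Real.le_log_iff_exp_le (by norm_num : (0:ℝ) < 512)]
        have := Real.exp_one_lt_d9
        linarith
      have h5a : L ≤ (512:ℝ)^(L-1) := by
        have hexp := Real.add_one_le_exp ((L-1)*Real.log 512)
        have heq : (512:ℝ)^(L-1) = Real.exp (Real.log 512 * (L-1)) :=
          Real.rpow_def_of_pos (by norm_num) _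
        have hge : L - 1 ≤ (L-1)*Real.log 512 := by
          have h0 : (0:ℝ) ≤ L - 1 := by linarith
          calc L - 1 = (L-1)*1 := by ring
            _ ≤ (L-1)*Real.log 512 := mul_le_mul_of_nonneg_left hlog h0
        rw [heq, mul_comm]
        linarith
      have h5b : (512:ℝ)^L = 512 * (512:ℝ)^(L-1) := by
        have : L = 1 + (L-1) := by ring
        nth_rewrite 1 [this]
        rw [Real.rpow_add (by norm_num : (0:ℝ) < 512), Real.rpow_one]
      have h512 : 192*L ≤ (2:ℝ)^(9*L) := by
        rw [e9, h5b]
        have h5c := mul_le_mul_of_nonneg_left h5a (by norm_num : (0:ℝ) ≤ 512)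
        linarith
      have h2Lnn : (0:ℝ) ≤ (2:ℝ)^L := Real.rpow_nonneg (by norm_num) L
      have hsplitL : (2:ℝ)^(9*L) * (2:ℝ)^L = (2:ℝ)^(10*L) := by
        rw [← Real.rpow_add (by norm_num : (0:ℝ) < 2)]
        congr 1
        ring
      calc 12*(n:ℝ)/m ≤ 192*L*(2*(n:ℝ)/(k:ℝ)) := by rw [← hstep2]; exact hstep1
        _ = 192*L*(2:ℝ)^L := by rw [h2L]
        _ ≤ (2:ℝ)^(9*L) * (2:ℝ)^L := mul_le_mul_of_nonneg_right h512 h2Lnn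
        _ = (2:ℝ)^(10*L) := hsplitL
    have hcardN : Fintype.card (Sym (Option (Fin n × Bool)) m) ≤ 2^k := by
      have hLm : (0:ℝ) ≤ L*(m:ℝ) := by positivity
      have hexp : 10*L*(m:ℝ) ≤ (k:ℝ) := by
        have h16 : (m:ℝ)*(16*L) ≤ (k:ℝ) := by
          rw [← le_div_iff₀ (by positivity : (0:ℝ) < 16*L)]
          exact hmub
        have h10 : 10*L*(m:ℝ) ≤ 16*L*(m:ℝ) := by linarith [hLm]
        have h16' : 16*L*(m:ℝ) ≤ (k:ℝ) := by linarith [h16]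
        linarith
      have hp1 : (12*(n:ℝ)/m)^m ≤ ((2:ℝ)^(10*L))^m :=
        pow_le_pow_left₀ (by positivity) h12 m
      have hp2 : ((2:ℝ)^(10*L))^m = (2:ℝ)^(10*L*(m:ℝ)) := by
        rw [← Real.rpow_natCast ((2:ℝ)^(10*L)) m, ← Real.rpow_mul (by norm_num : (0:ℝ) ≤ 2)]
      have hp3 : (2:ℝ)^(10*L*(m:ℝ)) ≤ (2:ℝ)^((k:ℝ)) :=
        Real.rpow_le_rpow_of_exponent_le one_le_two hexp
      have hp4 : (2:ℝ)^((k:ℝ)) = ((2^k : ℕ):ℝ) := by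
        rw [Real.rpow_natCast]
        push_cast
        ring
      have hfinal : (Fintype.card (Sym (Option (Fin n × Bool)) m) : ℝ) ≤ ((2^k : ℕ):ℝ) := by
        rw [hcn]
        calc ((2*n+m).choose m : ℝ) ≤ (12*(n:ℝ)/m)^m := hcard1
          _ ≤ ((2:ℝ)^(10*L))^m := hp1
          _ = (2:ℝ)^(10*L*(m:ℝ)) := hp2
          _ ≤ (2:ℝ)^((k:ℝ)) := hp3
          _ = ((2^k : ℕ):ℝ) := hp4
      exact_mod_cast hfinal
    obtain ⟨ι⟩ : Nonempty (Sym (Option (Fin n × Bool)) m ↪ Fin (2^k)) := by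
      rw [Function.Embedding.nonempty_iff_card_le]
      simpa using hcardN
    set Φ : Sym (Option (Fin n × Bool)) m → X :=
      fun s => (m:ℝ)⁻¹ • ((s.1.map (psiMap g)).sum) with hΦdef
    set y : Fin (2^k) → X := fun i => if h : ∃ s, ι s = i then Φ h.choose else 0 with hydef
    have hyΦ : ∀ s, y (ι s) = Φ s := by
      intro s
      have hex : ∃ s', ι s' = ι s := ⟨s, rfl⟩
      rw [hydef]
      simp only [dif_pos hex]
      exact congrArg Φ (ι.injective hex.choose_spec)
    set ε0 : ℝ := B^(1/q) * (m:ℝ)^(1/q - 1) with hε0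
    have hε0pos : 0 < ε0 := mul_pos hBq (Real.rpow_pos_of_pos hm0 _)
    apply entropyNum_le _ k hε0pos _ y
    · -- covering
      intro w hw
      obtain ⟨c, hc, hwc⟩ := hw
      obtain ⟨l, hl, hbd⟩ := greedy_lemma q γ hq1 hq2 hγ hsm hn g hg c hc m
      refine ⟨ι (Sym.mk (l : Multiset _) ((Multiset.coe_card l).trans hl)), ?_⟩
      rw [hyΦ]
      have hΦval : Φ (Sym.mk (l : Multiset _) ((Multiset.coe_card l).trans hl))
          = (m:ℝ)⁻¹ • (l.map (psiMap g)).sum := by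
        rw [hΦdef]
        simp only [Sym.toMultiset, Multiset.map_coe, Multiset.sum_coe]
      rw [hΦval]
      set S : X := (l.map (psiMap g)).sum with hS
      have hw1 : w - (m:ℝ)⁻¹ • S = (m:ℝ)⁻¹ • ((m:ℝ) • w - S) := by
        rw [smul_sub, smul_smul, inv_mul_cancel₀ (ne_of_gt hm0), one_smul]
      rw [hw1, norm_smul, Real.norm_eq_abs, abs_of_pos (inv_pos.2 hm0)]
      have ha : ‖S - (m:ℝ) • w‖ ≤ (B*m)^(1/q) := by
        have h0 : ‖S - (m:ℝ) • w‖ = (‖S - (m:ℝ) • w‖^q)^(1/q) := by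
          rw [← Real.rpow_mul (norm_nonneg _), mul_one_div, div_self (ne_of_gt hq0),
            Real.rpow_one]
        rw [h0]
        apply Real.rpow_le_rpow (Real.rpow_nonneg (norm_nonneg _) q) _ (le_of_lt hqinv)
        rw [hS, hwc]
        exact hbd
      calc (m:ℝ)⁻¹ * ‖(m:ℝ) • w - S‖ = (m:ℝ)⁻¹ * ‖S - (m:ℝ) • w‖ := by rw [norm_sub_rev]
        _ ≤ (m:ℝ)⁻¹ * (B*m)^(1/q) := mul_le_mul_of_nonneg_left ha (by positivity)
        _ = ε0 := by
            rw [hε0, Real.mul_rpow hBpos.le hm0.le, Real.rpow_sub hm0, Real.rpow_one]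
            ring
    · -- ε0 ≤ C * (L/k)^e
      have hm1q : (m:ℝ)^(1/q - 1) = ((m:ℝ)⁻¹)^e := by
        rw [Real.inv_rpow hm0.le, ← Real.rpow_neg hm0.le]
        congr 1
        rw [he]; ring
      have hinvm : (m:ℝ)⁻¹ ≤ 32*L/(k:ℝ) := by
        have hx02 : x0/2 = (k:ℝ)/(32*L) := by rw [hx0]; ring
        have hmlb' : (k:ℝ)/(32*L) ≤ m := by rw [← hx02]; exact hmlb
        have h1 := inv_anti₀ (by positivity : (0:ℝ) < (k:ℝ)/(32*L)) hmlb'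
        rwa [inv_div] at h1
      have hstep : ((m:ℝ)⁻¹)^e ≤ (32*L/(k:ℝ))^e :=
        Real.rpow_le_rpow (inv_nonneg.2 hm0.le) hinvm he0.le
      have hsplit : (32*L/(k:ℝ))^e ≤ 32*(L/(k:ℝ))^e := by
        have h32 : 32*L/(k:ℝ) = 32*(L/(k:ℝ)) := by ring
        rw [h32, Real.mul_rpow (by norm_num) (by positivity)]
        apply mul_le_mul_of_nonneg_right _ hLke
        have h := Real.rpow_le_rpow_of_exponent_le (by norm_num : (1:ℝ) ≤ 32) he1
        rwa [Real.rpow_one] at h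
      calc ε0 = B^(1/q) * ((m:ℝ)⁻¹)^e := by rw [hε0, hm1q]
        _ ≤ B^(1/q) * (32*(L/(k:ℝ))^e) := by
            apply mul_le_mul_of_nonneg_left _ hBq.le
            linarith
        _ ≤ C * (L/(k:ℝ))^e := by
            rw [hC]
            linarith [hLke]
end

section
/- Let B^n_p denote the unit ball of ℓ^n_p, 2 ≤ p < ∞. Then the entropy numbers of B^n_p in the ℓ^n_∞ norm satisfy ε_k(B^n_p, ℓ^n_∞) ≤ C(p) ( log(2n/k)/k )^{1/p} for k = 1,...,n, where C(p) depends only on p. -/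
open Finset

/-- Injective encoding of integers into naturals with `ee t ≤ 2|t|`. -/
def ee (t : ℤ) : ℕ := if 0 ≤ t then 2 * t.natAbs else 2 * t.natAbs - 1

lemma ee_inj : Function.Injective ee := by
  intro s t h
  unfold ee at h
  split_ifs at h <;> omega

lemma natAbs_le_ee (t : ℤ) : t.natAbs ≤ ee t := by unfold ee; split_ifs <;> omega

lemma ee_le (t : ℤ) : ee t ≤ 2 * t.natAbs := by unfold ee; split_ifs <;> omega

/-- The finite set of integer vectors with `∑ ee (z i) ≤ D`. -/
noncomputable def intBall (n D : ℕ) : Finset (Fin n → ℤ) :=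
  (Fintype.piFinset fun _ => Finset.Icc (-(D : ℤ)) D).filter fun z => ∑ i, ee (z i) ≤ D

lemma hockey (n : ℕ) : ∀ D : ℕ, ∑ j ∈ range (D + 1), (n + j).choose n = (n + D + 1).choose (n + 1) := by
  intro D
  induction D with
  | zero => simp
  | succ D ih =>
      rw [Finset.sum_range_succ, ih]
      rw [show n + (D + 1) = n + D + 1 by omega]
      have := Nat.choose_succ_succ (n + D + 1) n
      simp only [Nat.succ_eq_add_one] at this ⊢
      omega

lemma card_intBall : ∀ n D : ℕ, (intBall n D).card ≤ (n + D).choose D := by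
  intro n
  induction n with
  | zero =>
      intro D
      have : (intBall 0 D).card ≤ 1 := by
        apply Finset.card_le_one.mpr
        intro a _ b _
        funext i; exact absurd i.2 (by omega)
      simpa using this.trans_eq (Nat.choose_self D).symm
  | succ n ih =>
      intro D
      have key : (intBall (n+1) D).card ≤
          ((Finset.range (D+1)).sigma (fun j => intBall n (D - j))).card := by
        apply Finset.card_le_card_of_injOn
          (fun z => ⟨ee (z (Fin.last n)), Fin.init z⟩)
        · intro z hz
          simp only [Finset.mem_coe, intBall, Finset.mem_filter, Fintype.mem_piFinset] at hz
          obtain ⟨hbox, hsum⟩ := hz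
          have hsplit : ∑ i, ee (z i) = (∑ i : Fin n, ee (z i.castSucc)) + ee (z (Fin.last n)) :=
            Fin.sum_univ_castSucc (fun i => ee (z i))
          have hlast : ee (z (Fin.last n)) ≤ D := by omega
          simp only [Finset.mem_coe, Finset.mem_sigma, Finset.mem_range, intBall, Finset.mem_filter,
            Fintype.mem_piFinset]
          refine ⟨by omega, fun i => ?_, ?_⟩
          · have h1 : (z i.castSucc).natAbs ≤ ee (z i.castSucc) := natAbs_le_ee _
            have h2 : ee (z i.castSucc) ≤ ∑ i : Fin n, ee (z i.castSucc) :=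
              Finset.single_le_sum (f := fun i : Fin n => ee (z i.castSucc))
                (fun _ _ => Nat.zero_le _) (Finset.mem_univ i)
            have h3 : (z i.castSucc).natAbs ≤ D - ee (z (Fin.last n)) := by omega
            have hii : (Fin.init z) i = z i.castSucc := rfl
            simp only [Finset.mem_Icc, hii]
            omega
          · show (∑ i : Fin n, ee ((Fin.init z) i)) ≤ D - ee (z (Fin.last n))
            have : ∀ i : Fin n, (Fin.init z) i = z i.castSucc := fun i => rfl
            simp_rw [this]
            omega
        · intro a ha b hb hab
          rw [Sigma.ext_iff] at hab
          obtain ⟨h1, h2⟩ := hab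
          have hlast : a (Fin.last n) = b (Fin.last n) := ee_inj h1
          have hinit : Fin.init a = Fin.init b := eq_of_heq h2
          funext i
          refine Fin.lastCases ?_ ?_ i
          · exact hlast
          · intro j; exact congrFun hinit j
      rw [Finset.card_sigma] at key
      calc (intBall (n+1) D).card ≤ ∑ j ∈ range (D+1), (intBall n (D - j)).card := key
        _ ≤ ∑ j ∈ range (D+1), (n + (D - j)).choose (D - j) :=
            Finset.sum_le_sum fun j _ => ih (D - j)
        _ = ∑ j ∈ range (D+1), (n + j).choose j := by
            rw [← Finset.sum_range_reflect]
            apply Finset.sum_congr rfl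
            intro j hj
            simp only [Finset.mem_range] at hj
            congr 1 <;> omega
        _ = ∑ j ∈ range (D+1), (n + j).choose n := by
            apply Finset.sum_congr rfl
            intro j _
            rw [← Nat.choose_symm (by omega)]
            congr 1; omega
        _ = (n + D + 1).choose (n + 1) := hockey n D
        _ = (n + 1 + D).choose D := by
            rw [← Nat.choose_symm (by omega)]
            congr 1 <;> omega

lemma succ_pow_le_exp_mul (d : ℕ) : ((d : ℝ) + 1) ^ d ≤ Real.exp 1 * (d : ℝ) ^ d := by
  rcases Nat.eq_zero_or_pos d with h | h
  · subst h
    simpa using Real.one_le_exp (by norm_num)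
  · have hd : (0 : ℝ) < d := by exact_mod_cast h
    have h1 : (1 + 1 / (d : ℝ)) ≤ Real.exp (1 / d) := by
      have := Real.add_one_le_exp (1 / (d : ℝ)); linarith
    have h3 : (1 + 1 / (d : ℝ)) ^ d ≤ Real.exp (1 / d) ^ d :=
      pow_le_pow_left₀ (by positivity) h1 d
    have h4 : Real.exp (1 / (d : ℝ)) ^ d = Real.exp 1 := by
      rw [← Real.exp_nat_mul]; congr 1; field_simp
    have h5 : ((d : ℝ) + 1) ^ d = (1 + 1 / (d : ℝ)) ^ d * (d : ℝ) ^ d := by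
      rw [← mul_pow]; congr 1; field_simp
    rw [h5]
    calc (1 + 1 / (d : ℝ)) ^ d * (d : ℝ) ^ d ≤ Real.exp (1 / d) ^ d * (d : ℝ) ^ d :=
          mul_le_mul_of_nonneg_right h3 (by positivity)
      _ = Real.exp 1 * (d : ℝ) ^ d := by rw [h4]

lemma pow_self_le_exp_mul_factorial : ∀ d : ℕ, (d : ℝ) ^ d ≤ Real.exp 1 ^ d * (Nat.factorial d : ℝ) := by
  intro d
  induction d with
  | zero => simp
  | succ d ih =>
      have key := succ_pow_le_exp_mul d
      have hnn : (0 : ℝ) ≤ (d : ℝ) + 1 := by positivity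
      calc ((d + 1 : ℕ) : ℝ) ^ (d + 1) = ((d : ℝ) + 1) * ((d : ℝ) + 1) ^ d := by
            push_cast; ring
        _ ≤ ((d : ℝ) + 1) * (Real.exp 1 * (d : ℝ) ^ d) := by
            exact mul_le_mul_of_nonneg_left key hnn
        _ ≤ ((d : ℝ) + 1) * (Real.exp 1 * (Real.exp 1 ^ d * (Nat.factorial d : ℝ))) := by
            apply mul_le_mul_of_nonneg_left _ hnn
            exact mul_le_mul_of_nonneg_left ih (Real.exp_pos 1).le
        _ = Real.exp 1 ^ (d + 1) * ((Nat.factorial (d + 1) : ℝ)) := by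
            rw [Nat.factorial_succ]; push_cast; ring

lemma choose_le_exp_pow (N D : ℕ) (hD : 1 ≤ D) :
    ((N.choose D : ℕ) : ℝ) ≤ (Real.exp 1 * N / D) ^ D := by
  have hfac : (0 : ℝ) < (Nat.factorial D : ℝ) := by exact_mod_cast D.factorial_pos
  have hDpos : (0 : ℝ) < (D : ℝ) := by exact_mod_cast hD
  have hA := pow_self_le_exp_mul_factorial D
  calc ((N.choose D : ℕ) : ℝ) ≤ (N : ℝ) ^ D / (Nat.factorial D : ℝ) := Nat.choose_le_pow_div D N
    _ ≤ (Real.exp 1 * N / D) ^ D := by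
        rw [div_pow, mul_pow, div_le_div_iff₀ hfac (by positivity)]
        calc (N : ℝ) ^ D * (D : ℝ) ^ D = (D : ℝ) ^ D * (N : ℝ) ^ D := by ring
          _ ≤ (Real.exp 1 ^ D * (Nat.factorial D : ℝ)) * (N : ℝ) ^ D :=
              mul_le_mul_of_nonneg_right hA (by positivity)
          _ = Real.exp 1 ^ D * (N : ℝ) ^ D * (Nat.factorial D : ℝ) := by ring
set_option maxHeartbeats 1000000 in
lemma key_count (n k B : ℕ) (L : ℝ) (hk : 1 ≤ k) (hkn : k ≤ n) (hB : 1 ≤ B)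
    (hL : 1 ≤ L) (hBL : (B : ℝ) * (128 * L) ≤ k)
    (hlog : Real.log (2 * n / k) = L * Real.log 2) :
    (((n + 2 * B).choose (2 * B) : ℕ) : ℝ) ≤ 2 ^ k := by
  have hkR : (1 : ℝ) ≤ (k : ℝ) := by exact_mod_cast hk
  have hnR : (k : ℝ) ≤ (n : ℝ) := by exact_mod_cast hkn
  have hBR : (1 : ℝ) ≤ (B : ℝ) := by exact_mod_cast hB
  have hLpos : (0 : ℝ) < L := by linarith
  have hB128 : (B : ℝ) * 128 ≤ k := by nlinarith
  set D : ℕ := 2 * B with hD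
  have hDR : (D : ℝ) = 2 * B := by push_cast [hD]; ring
  have hDpos : (0 : ℝ) < D := by rw [hDR]; linarith
  have hDk : (D : ℝ) ≤ (k : ℝ) / 64 := by rw [hDR]; linarith
  have hDn : (D : ℝ) ≤ (n : ℝ) := by nlinarith
  have hNle : ((n + D : ℕ) : ℝ) ≤ 2 * n := by push_cast; linarith
  have he : (0 : ℝ) < Real.exp 1 := Real.exp_pos 1
  set x : ℝ := Real.exp 1 * (2 * n) / D with hx
  have hxpos : 0 < x := by
    apply div_pos (by nlinarith) hDpos
  -- step 1-2 : choose ≤ x ^ D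
  have step12 : (((n + D).choose D : ℕ) : ℝ) ≤ x ^ D := by
    calc (((n + D).choose D : ℕ) : ℝ) ≤ (Real.exp 1 * (n + D : ℕ) / D) ^ D :=
          choose_le_exp_pow (n + D) D (by omega)
      _ ≤ x ^ D := by
          apply pow_le_pow_left₀ (by positivity)
          apply div_le_div_of_nonneg_right ?_ hDpos.le
          nlinarith
  -- step 4 : (D : ℝ) * Real.log x ≤ k * Real.log 2
  have hlog2 : (0 : ℝ) < Real.log 2 := Real.log_pos (by norm_num)
  have hfac : x = (2 * n / k) * (Real.exp 1 * k / D) := by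
    rw [hx]; field_simp
  have h2nk : (0 : ℝ) < 2 * n / k := div_pos (by nlinarith) (by linarith)
  have hekD : (0 : ℝ) < Real.exp 1 * k / D := by positivity
  have hlogx : Real.log x = L * Real.log 2 + Real.log (Real.exp 1 * k / D) := by
    rw [hfac, Real.log_mul (ne_of_gt h2nk) (ne_of_gt hekD), hlog]
  have hsqrt : Real.log (Real.exp 1 * k / D) ≤ 2 * Real.sqrt (Real.exp 1 * k / D) := by
    have h1 : Real.log (Real.sqrt (Real.exp 1 * k / D)) ≤ Real.sqrt (Real.exp 1 * k / D) - 1 :=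
      Real.log_le_sub_one_of_pos (Real.sqrt_pos.mpr hekD)
    have h2 : Real.log (Real.sqrt (Real.exp 1 * k / D)) = Real.log (Real.exp 1 * k / D) / 2 :=
      Real.log_sqrt hekD.le
    linarith
  have hDsqrt : (D : ℝ) * Real.sqrt (Real.exp 1 * k / D) = Real.sqrt (Real.exp 1 * k * D) := by
    rw [show (D : ℝ) = Real.sqrt ((D : ℝ) ^ 2) from (Real.sqrt_sq hDpos.le).symm,
      ← Real.sqrt_mul (by positivity)]
    congr 1
    rw [Real.sqrt_sq hDpos.le]
    field_simp
  have hsqrt2 : Real.sqrt (Real.exp 1 * k * D) ≤ Real.sqrt (Real.exp 1) * k / 8 := by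
    have h1 : Real.exp 1 * k * D ≤ Real.exp 1 * ((k : ℝ) / 8) ^ 2 :=
      (mul_le_mul_of_nonneg_left hDk (by positivity : (0:ℝ) ≤ Real.exp 1 * (k:ℝ))).trans_eq
        (by ring)
    have h2 : Real.sqrt (Real.exp 1 * ((k : ℝ) / 8) ^ 2) = Real.sqrt (Real.exp 1) * ((k : ℝ) / 8) := by
      rw [Real.sqrt_mul he.le, Real.sqrt_sq (by positivity)]
    calc Real.sqrt (Real.exp 1 * k * D) ≤ Real.sqrt (Real.exp 1 * ((k : ℝ) / 8) ^ 2) :=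
          Real.sqrt_le_sqrt h1
      _ = Real.sqrt (Real.exp 1) * k / 8 := by rw [h2]; ring
  have hBLk : (D : ℝ) * (L * Real.log 2) ≤ k * Real.log 2 / 64 := by
    rw [hDR]
    have h := mul_le_mul_of_nonneg_right hBL hlog2.le
    have hid : (2:ℝ) * B * (L * Real.log 2) = (↑B * (128 * L) * Real.log 2) / 64 := by ring
    rw [hid]
    linarith
  have hnum : Real.sqrt (Real.exp 1) ≤ 63 * Real.log 2 / 16 := by
    have h1 : Real.exp 1 ≤ (63 * Real.log 2 / 16) ^ 2 := by
      have hl := Real.log_two_gt_d9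
      have he2 := Real.exp_one_lt_d9
      nlinarith [sq_nonneg (Real.log 2 - 0.6931471803)]
    calc Real.sqrt (Real.exp 1) ≤ Real.sqrt ((63 * Real.log 2 / 16) ^ 2) := Real.sqrt_le_sqrt h1
      _ = 63 * Real.log 2 / 16 := Real.sqrt_sq (by positivity)
  have step4 : (D : ℝ) * Real.log x ≤ k * Real.log 2 := by
    have hchain : (D : ℝ) * Real.log x ≤
        (D : ℝ) * (L * Real.log 2) + 2 * Real.sqrt (Real.exp 1 * k * D) := by
      rw [hlogx, mul_add]
      have := mul_le_mul_of_nonneg_left hsqrt hDpos.le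
      nlinarith [hDsqrt]
    have h2 : 2 * Real.sqrt (Real.exp 1 * k * D) ≤ 2 * (Real.sqrt (Real.exp 1) * k / 8) := by
      linarith [hsqrt2]
    have h3 : Real.sqrt (Real.exp 1) * k / 4 ≤ 63 * Real.log 2 * k / 64 := by
      nlinarith [hnum]
    linarith
  -- step 5 : conclude
  have hxD : x ^ D = Real.exp ((D : ℝ) * Real.log x) := by
    conv_lhs => rw [← Real.exp_log hxpos]
    rw [← Real.exp_nat_mul]
  have h2k : Real.exp ((k : ℝ) * Real.log 2) = 2 ^ k := by
    rw [Real.exp_nat_mul, Real.exp_log (by norm_num)]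
  calc (((n + D).choose D : ℕ) : ℝ) ≤ x ^ D := step12
    _ = Real.exp ((D : ℝ) * Real.log x) := hxD
    _ ≤ Real.exp ((k : ℝ) * Real.log 2) := Real.exp_le_exp.mpr step4
    _ = 2 ^ k := h2k

lemma round_exists (δ t : ℝ) (hδ : 0 < δ) :
    ∃ m : ℤ, |t - δ * m| ≤ δ ∧ ((m.natAbs : ℝ)) * δ ≤ |t| := by
  rcases le_or_gt 0 t with ht | ht
  · refine ⟨⌊t / δ⌋, ?_, ?_⟩
    · have hfl : ((⌊t / δ⌋ : ℤ) : ℝ) ≤ t / δ := Int.floor_le _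
      have hfl2 : t / δ < (⌊t / δ⌋ : ℝ) + 1 := Int.lt_floor_add_one _
      have h1 : δ * (⌊t / δ⌋ : ℝ) ≤ t := by
        have := mul_le_mul_of_nonneg_left hfl hδ.le
        rwa [mul_div_cancel₀ _ hδ.ne'] at this
      have h2 : t < δ * (⌊t / δ⌋ : ℝ) + δ := by
        have := mul_lt_mul_of_pos_left hfl2 hδ
        rw [mul_div_cancel₀ _ hδ.ne'] at this
        linarith [this]
      rw [abs_le]; constructor <;> linarith
    · have h0 : (0 : ℤ) ≤ ⌊t / δ⌋ := Int.floor_nonneg.mpr (by positivity)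
      have hcast : ((⌊t / δ⌋.natAbs : ℕ) : ℝ) = ((⌊t / δ⌋ : ℤ) : ℝ) := by
        rw [Nat.cast_natAbs]
        exact_mod_cast abs_of_nonneg h0
      have hfl : ((⌊t / δ⌋ : ℤ) : ℝ) ≤ t / δ := Int.floor_le _
      have h1 : ((⌊t / δ⌋ : ℤ) : ℝ) * δ ≤ t := by
        have := mul_le_mul_of_nonneg_right hfl hδ.le
        rwa [div_mul_cancel₀ _ hδ.ne'] at this
      rw [hcast, abs_of_nonneg ht]; exact h1
  · refine ⟨⌈t / δ⌉, ?_, ?_⟩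
    · have hcl : t / δ ≤ ((⌈t / δ⌉ : ℤ) : ℝ) := Int.le_ceil _
      have hcl2 : ((⌈t / δ⌉ : ℤ) : ℝ) < t / δ + 1 := Int.ceil_lt_add_one _
      have h1 : t ≤ δ * ((⌈t / δ⌉ : ℤ) : ℝ) := by
        have := mul_le_mul_of_nonneg_left hcl hδ.le
        rwa [mul_div_cancel₀ _ hδ.ne'] at this
      have h2 : δ * ((⌈t / δ⌉ : ℤ) : ℝ) < t + δ := by
        have := mul_lt_mul_of_pos_left hcl2 hδ
        rw [mul_add, mul_div_cancel₀ _ hδ.ne', mul_one] at this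
        linarith [this]
      rw [abs_le]; constructor <;> linarith
    · have h0 : ⌈t / δ⌉ ≤ (0 : ℤ) := by
        apply Int.ceil_le.mpr
        push_cast
        exact div_nonpos_of_nonpos_of_nonneg ht.le hδ.le
      have hcast : ((⌈t / δ⌉.natAbs : ℕ) : ℝ) = -((⌈t / δ⌉ : ℤ) : ℝ) := by
        rw [Nat.cast_natAbs]
        exact_mod_cast abs_of_nonpos h0
      have hcl : t / δ ≤ ((⌈t / δ⌉ : ℤ) : ℝ) := Int.le_ceil _
      have h1 : t ≤ ((⌈t / δ⌉ : ℤ) : ℝ) * δ := by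
        have := mul_le_mul_of_nonneg_right hcl hδ.le
        rwa [div_mul_cancel₀ _ hδ.ne'] at this
      rw [hcast, abs_of_neg ht]; linarith
lemma exists_cover_fun {X : Type*} [Inhabited X] (S : Finset X) (N : ℕ) (hS : S.card ≤ N) :
    ∃ y : Fin N → X, ∀ x ∈ S, ∃ j, y j = x := by
  refine ⟨fun j => S.toList.getD j default, ?_⟩
  intro x hx
  rw [← Finset.mem_toList] at hx
  obtain ⟨i, hi, hix⟩ := List.mem_iff_getElem.mp hx
  have hiN : i < N := lt_of_lt_of_le (by simpa [Finset.length_toList] using hi) hS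
  refine ⟨⟨i, hiN⟩, ?_⟩
  show S.toList.getD i default = x
  rw [List.getD_eq_getElem _ _ hi]; exact hix

open scoped BigOperators

set_option maxHeartbeats 1000000 in
/-- For `2 ≤ p < ∞`, the unit ball `B^n_p` of `ℓ^n_p` satisfies
`ε_k(B^n_p, ℓ^n_∞) ≤ C(p) (log₂(2n/k)/k)^{1/p}` for `k = 1,...,n`. -/
theorem stmt10 (p : ℝ) (hp : 2 ≤ p) :
    ∃ C > 0, ∀ n k : ℕ, 1 ≤ k → k ≤ n →
      entropyNum {f : Fin n → ℝ | (∑ i, |f i| ^ p) ≤ 1} k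
        ≤ C * (Real.logb 2 (2 * n / k) / k) ^ (1 / p) := by
  have hp0 : (0:ℝ) < p := by linarith
  refine ⟨(128 : ℝ) ^ (1/p), Real.rpow_pos_of_pos (by norm_num) _, ?_⟩
  intro n k hk hkn
  have hkR : (1:ℝ) ≤ (k:ℝ) := by exact_mod_cast hk
  have hnk : (k:ℝ) ≤ (n:ℝ) := by exact_mod_cast hkn
  have hkpos : (0:ℝ) < k := by linarith
  set L : ℝ := Real.logb 2 (2 * n / k) with hLdef
  have h2nk2 : (2:ℝ) ≤ 2 * n / k := by
    rw [le_div_iff₀ hkpos]; linarith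
  have hL1 : 1 ≤ L := by
    rw [hLdef, show (1:ℝ) = Real.logb 2 2 from (Real.logb_self_eq_one (by norm_num)).symm]
    exact Real.logb_le_logb_of_le (by norm_num) (by norm_num) h2nk2
  have hLpos : (0:ℝ) < L := by linarith
  have hLk : (0:ℝ) < L / k := by positivity
  set δ : ℝ := (128:ℝ)^(1/p) * (L/k)^(1/p) with hδdef
  have hδeq : δ = (128 * (L/k))^(1/p) := by
    rw [hδdef, ← Real.mul_rpow (by norm_num) hLk.le]
  have hδpos : 0 < δ := by rw [hδeq]; positivity
  have hδp : δ ^ p = 128 * (L/k) := by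
    rw [hδeq, ← Real.rpow_mul (by positivity), one_div_mul_cancel hp0.ne', Real.rpow_one]
  set B : ℕ := ⌊(k:ℝ)/(128*L)⌋₊ with hBdef
  have hBle : (B:ℝ) ≤ (k:ℝ)/(128*L) := Nat.floor_le (by positivity)
  have hchoose : (((n + 2*B).choose (2*B) : ℕ) : ℝ) ≤ 2^k := by
    rcases Nat.eq_zero_or_pos B with hB0 | hB1
    · rw [hB0]
      simp only [Nat.mul_zero, Nat.add_zero, Nat.choose_zero_right, Nat.cast_one]
      exact one_le_pow₀ (by norm_num)
    · apply key_count n k B L hk hkn hB1 hL1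
      · have h := mul_le_mul_of_nonneg_right hBle (by positivity : (0:ℝ) ≤ 128*L)
        rwa [div_mul_cancel₀ _ (by positivity : (128*L : ℝ) ≠ 0)] at h
      · rw [hLdef, Real.logb]
        field_simp
  have hchooseN : (n + 2*B).choose (2*B) ≤ 2^k := by exact_mod_cast hchoose
  have hcardN : (intBall n (2*B)).card ≤ 2^k := (card_intBall n (2*B)).trans hchooseN
  set Y : Finset (Fin n → ℝ) :=
    (intBall n (2*B)).image (fun z => fun i => δ * (z i : ℝ)) with hYdef
  have hYcard : Y.card ≤ 2^k := le_trans Finset.card_image_le hcardN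
  obtain ⟨y, hy⟩ := exists_cover_fun Y (2^k) hYcard
  have hmain : entropyNum {f : Fin n → ℝ | (∑ i, |f i| ^ p) ≤ 1} k ≤ δ := by
    apply csInf_le ⟨0, fun ε hε => hε.1.le⟩
    refine ⟨hδpos, y, ?_⟩
    intro w hw
    simp only [Set.mem_setOf_eq] at hw
    choose m hm1 hm2 using fun i => round_exists δ (w i) hδpos
    have hcoord : ∀ i, (((m i).natAbs : ℕ) : ℝ) ≤ |w i| ^ p / δ ^ p := by
      intro i
      have hle : (((m i).natAbs : ℕ) : ℝ) ≤ |w i| / δ := (le_div_iff₀ hδpos).mpr (hm2 i)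
      have h1 : (((m i).natAbs : ℕ) : ℝ) ≤ (((m i).natAbs : ℕ) : ℝ) ^ p := by
        rcases Nat.eq_zero_or_pos (m i).natAbs with h | h
        · rw [h]
          push_cast
          positivity
        · have hx1 : (1:ℝ) ≤ (((m i).natAbs : ℕ) : ℝ) := by exact_mod_cast h
          calc (((m i).natAbs : ℕ) : ℝ) = (((m i).natAbs : ℕ) : ℝ) ^ (1:ℝ) :=
                (Real.rpow_one _).symm
            _ ≤ _ := Real.rpow_le_rpow_of_exponent_le hx1 (by linarith)
      have h2 : (((m i).natAbs : ℕ) : ℝ) ^ p ≤ (|w i| / δ) ^ p :=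
        Real.rpow_le_rpow (by positivity) hle hp0.le
      have h3 : (|w i| / δ) ^ p = |w i| ^ p / δ ^ p := Real.div_rpow (abs_nonneg _) hδpos.le p
      rw [← h3]
      linarith
    have hsum : (∑ i, (((m i).natAbs : ℕ) : ℝ)) ≤ (k:ℝ) / (128 * L) := by
      have hδppos : (0:ℝ) < δ ^ p := by rw [hδp]; positivity
      calc ∑ i, (((m i).natAbs : ℕ) : ℝ) ≤ ∑ i, |w i| ^ p / δ ^ p :=
            Finset.sum_le_sum (fun i _ => hcoord i)
        _ = (∑ i, |w i| ^ p) / δ ^ p := by rw [Finset.sum_div]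
        _ ≤ 1 / δ ^ p := by gcongr
        _ = (k:ℝ) / (128 * L) := by rw [hδp]; field_simp
    have hsumN : (∑ i, (m i).natAbs) ≤ B := by
      rw [hBdef]
      apply Nat.le_floor
      push_cast
      exact hsum
    have hmem : m ∈ intBall n (2*B) := by
      have hee : ∑ i, ee (m i) ≤ 2*B := by
        calc ∑ i, ee (m i) ≤ ∑ i, 2 * (m i).natAbs :=
              Finset.sum_le_sum (fun i _ => ee_le (m i))
          _ = 2 * ∑ i, (m i).natAbs := by rw [Finset.mul_sum]
          _ ≤ 2 * B := by omega
      simp only [intBall, Finset.mem_filter, Fintype.mem_piFinset, Finset.mem_Icc]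
      refine ⟨fun i => ?_, hee⟩
      have h1 := natAbs_le_ee (m i)
      have h2 : ee (m i) ≤ ∑ j, ee (m j) :=
        Finset.single_le_sum (f := fun j => ee (m j)) (fun _ _ => Nat.zero_le _)
          (Finset.mem_univ i)
      omega
    obtain ⟨j, hj⟩ := hy _ (Finset.mem_image_of_mem _ hmem)
    refine ⟨j, ?_⟩
    rw [hj]
    rw [pi_norm_le_iff_of_nonneg hδpos.le]
    intro i
    have hpt : (w - fun i => δ * ((m i : ℤ) : ℝ)) i = w i - δ * ((m i : ℤ) : ℝ) := rfl
    rw [hpt, Real.norm_eq_abs]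
    exact hm1 i
  exact hmain
end

section
/- Let X_N be an N-dimensional subspace of C(Ω), 1 ≤ p < ∞, and for x ∈ Ω and f ∈ X_N with ||f||_{L_p(μ)} ≤ 1 one has sup_f |f(x)| = inf{ ||D_N(x,·) - v||_{p'} : v ∈ L_{p'}(μ), v ⊥ X_N }, where D_N is the reproducing kernel of X_N and p' = p/(p-1). -/
open MeasureTheory
open scoped BigOperators


/- Auxiliary development for the proof of `stmt13`. -/
section Stmt13AuxSection
open scoped ENNReal

set_option linter.unusedSectionVars false
set_option linter.unusedVariables false
set_option maxHeartbeats 1000000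



namespace Stmt13Aux

variable {Ω : Type} [TopologicalSpace Ω] [CompactSpace Ω]
  [MeasurableSpace Ω] [BorelSpace Ω]
  {μ : Measure Ω} [IsProbabilityMeasure μ]
  {N : ℕ} {u : Fin N → C(Ω, ℝ)}

/-- the function with coefficients c -/
def fc (u : Fin N → C(Ω, ℝ)) (c : Fin N → ℝ) : Ω → ℝ := fun y => ∑ i, c i * u i y

lemma fc_cont (c : Fin N → ℝ) : Continuous (fc u c) := by
  apply continuous_finset_sum
  exact fun i _ => (continuous_const.mul (u i).continuous)

/-- continuous functions on a compact space are bounded -/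
lemma cont_bound (f : Ω → ℝ) (hf : Continuous f) : ∃ C : ℝ, 0 ≤ C ∧ ∀ y, |f y| ≤ C := by
  refine ⟨‖(⟨f, hf⟩ : C(Ω, ℝ))‖, norm_nonneg _, fun y => ?_⟩
  simpa using ContinuousMap.norm_coe_le_norm (⟨f, hf⟩ : C(Ω, ℝ)) y

lemma memLp_cont (f : Ω → ℝ) (hf : Continuous f) (r : ℝ≥0∞) : MemLp f r μ := by
  obtain ⟨C, _, hC⟩ := cont_bound f hf
  have htop : MemLp f ⊤ μ :=
    memLp_top_of_bound hf.aestronglyMeasurable C (Filter.Eventually.of_forall (by simpa using hC))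
  exact htop.mono_exponent le_top

lemma integrable_cont (f : Ω → ℝ) (hf : Continuous f) : Integrable f μ :=
  memLp_one_iff_integrable.1 (memLp_cont f hf 1)

/-- integral of fc c times u j -/
lemma int_fc_mul (hortho : ∀ i j, (∫ x, u i x * u j x ∂μ) = if i = j then (1 : ℝ) else 0)
    (c : Fin N → ℝ) (j : Fin N) :
    ∫ y, fc u c y * u j y ∂μ = c j := by
  have h1 : ∀ y, fc u c y * u j y = ∑ i, c i * (u i y * u j y) := by
    intro y; rw [fc]; rw [Finset.sum_mul]; congr 1; ext i; ring
  rw [integral_congr_ae (Filter.Eventually.of_forall h1)]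
  rw [integral_finset_sum]
  · have h2 : ∀ i ∈ Finset.univ, (∫ y, c i * (u i y * u j y) ∂μ) = if i = j then c i else 0 := by
      intro i _
      rw [integral_const_mul, hortho i j]
      split <;> simp
    rw [Finset.sum_congr rfl h2]
    simp
  · intro i _
    exact (integrable_cont _ ((u i).continuous.mul (u j).continuous)).const_mul _

lemma int_fc_fc (hortho : ∀ i j, (∫ x, u i x * u j x ∂μ) = if i = j then (1 : ℝ) else 0)
    (c d : Fin N → ℝ) :
    ∫ y, fc u c y * fc u d y ∂μ = ∑ i, c i * d i := by
  have h1 : ∀ y, fc u c y * fc u d y = ∑ j, d j * (fc u c y * u j y) := by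
    intro y
    show fc u c y * (∑ j, d j * u j y) = _
    rw [Finset.mul_sum]; congr 1; ext j; ring
  rw [integral_congr_ae (Filter.Eventually.of_forall h1), integral_finset_sum]
  · have h2 : ∀ j ∈ Finset.univ, (∫ y, d j * (fc u c y * u j y) ∂μ) = c j * d j := by
      intro j _
      rw [integral_const_mul, int_fc_mul hortho]
      ring
    rw [Finset.sum_congr rfl h2]
  · intro j _
    exact (integrable_cont _ ((fc_cont c).mul (u j).continuous)).const_mul _

/-- the L^r norm of fc c -/
noncomputable def Nrm (u : Fin N → C(Ω, ℝ)) (μ : Measure Ω) (r : ℝ) (c : Fin N → ℝ) : ℝ :=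
  (eLpNorm (fc u c) (ENNReal.ofReal r) μ).toReal

lemma ofReal_ne_zero {r : ℝ} (hr : 1 ≤ r) : ENNReal.ofReal r ≠ 0 := by
  simp only [ne_eq, ENNReal.ofReal_eq_zero, not_le]; linarith

lemma Nrm_eq_integral {r : ℝ} (hr : 1 ≤ r) (c : Fin N → ℝ) :
    Nrm u μ r c = (∫ y, |fc u c y| ^ r ∂μ) ^ r⁻¹ := by
  rw [Nrm, MemLp.eLpNorm_eq_integral_rpow_norm (ofReal_ne_zero hr) ENNReal.ofReal_ne_top
    (memLp_cont _ (fc_cont c) _)]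
  rw [ENNReal.toReal_ofReal (by positivity), ENNReal.toReal_ofReal (by linarith)]
  simp only [Real.norm_eq_abs, one_div]

lemma Nrm_nonneg (r : ℝ) (c : Fin N → ℝ) : 0 ≤ Nrm u μ r c := ENNReal.toReal_nonneg

lemma fc_smul (t : ℝ) (c : Fin N → ℝ) : fc u (t • c) = t • fc u c := by
  ext y; simp [fc, Finset.mul_sum, mul_assoc]

lemma Nrm_smul (r t : ℝ) (c : Fin N → ℝ) : Nrm u μ r (t • c) = |t| * Nrm u μ r c := by
  rw [Nrm, fc_smul, eLpNorm_const_smul, ENNReal.toReal_mul, Nrm]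
  simp [Real.norm_eq_abs]

lemma Nrm_eq_zero (hortho : ∀ i j, (∫ x, u i x * u j x ∂μ) = if i = j then (1 : ℝ) else 0)
    {r : ℝ} (hr : 1 ≤ r) (c : Fin N → ℝ) (h : Nrm u μ r c = 0) : c = 0 := by
  have hfin : eLpNorm (fc u c) (ENNReal.ofReal r) μ ≠ ⊤ := (memLp_cont _ (fc_cont c) _).2.ne
  have h0 : eLpNorm (fc u c) (ENNReal.ofReal r) μ = 0 := by
    rw [Nrm] at h
    exact ((ENNReal.toReal_eq_zero_iff _).1 h).resolve_right hfin
  have hae : fc u c =ᵐ[μ] 0 :=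
    (eLpNorm_eq_zero_iff (fc_cont c).aestronglyMeasurable (ofReal_ne_zero hr)).1 h0
  funext j
  have hz : ∫ y, fc u c y * u j y ∂μ = 0 := by
    rw [integral_congr_ae (g := fun (_ : Ω) => (0:ℝ))]
    · simp
    · filter_upwards [hae] with y hy
      simp [hy]
  have := (int_fc_mul hortho c j).symm.trans hz
  simpa using this

lemma Nrm_triangle {r : ℝ} (hr : 1 ≤ r) (c d : Fin N → ℝ) :
    Nrm u μ r (c + d) ≤ Nrm u μ r c + Nrm u μ r d := by
  have h : fc u (c + d) = fc u c + fc u d := by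
    ext y; simp [fc, add_mul, Finset.sum_add_distrib]
  rw [Nrm, h]
  have hle := eLpNorm_add_le (μ := μ) (f := fc u c) (g := fc u d)
    (fc_cont (u := u) c).aestronglyMeasurable (fc_cont (u := u) d).aestronglyMeasurable
    (p := ENNReal.ofReal r) (by simpa using ENNReal.one_le_ofReal.2 hr)
  have hfc : eLpNorm (fc u c) (ENNReal.ofReal r) μ ≠ ⊤ := (memLp_cont _ (fc_cont c) _).2.ne
  have hfd : eLpNorm (fc u d) (ENNReal.ofReal r) μ ≠ ⊤ := (memLp_cont _ (fc_cont d) _).2.ne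
  refine le_trans (ENNReal.toReal_mono (ENNReal.add_ne_top.2 ⟨hfc, hfd⟩) hle) ?_
  rw [ENNReal.toReal_add hfc hfd]
  exact le_refl _

lemma Nrm_mono_exponent {r s : ℝ} (hr : 1 ≤ r) (hrs : r ≤ s) (c : Fin N → ℝ) :
    Nrm u μ r c ≤ Nrm u μ s c := by
  have hle := eLpNorm_le_eLpNorm_of_exponent_le (f := fc u c) (μ := μ)
    (ENNReal.ofReal_le_ofReal hrs) (fc_cont (u := u) c).aestronglyMeasurable
  exact ENNReal.toReal_mono (memLp_cont _ (fc_cont c) _).2.ne hle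

end Stmt13Aux


namespace Stmt13Aux

variable {Ω : Type} [TopologicalSpace Ω] [CompactSpace Ω]
  [MeasurableSpace Ω] [BorelSpace Ω]
  {μ : Measure Ω} [IsProbabilityMeasure μ]
  {N : ℕ} {u : Fin N → C(Ω, ℝ)}

lemma Nrm_zero (r : ℝ) : Nrm u μ r (0 : Fin N → ℝ) = 0 := by
  have h : fc u (0 : Fin N → ℝ) = (0 : Ω → ℝ) := by
    funext y; simp [fc]
  rw [Nrm, h, eLpNorm_zero]
  simp

lemma Nrm_sum_le {r : ℝ} (hr : 1 ≤ r) {ι : Type*} (s : Finset ι) (g : ι → Fin N → ℝ) :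
    Nrm u μ r (∑ i ∈ s, g i) ≤ ∑ i ∈ s, Nrm u μ r (g i) := by
  classical
  induction s using Finset.induction with
  | empty => simp [Nrm_zero]
  | insert _ _ hx ih =>
    rename_i i s
    rw [Finset.sum_insert hx, Finset.sum_insert hx]
    exact le_trans (Nrm_triangle hr _ _) (by linarith)

lemma Nrm_upper {r : ℝ} (hr : 1 ≤ r) :
    ∃ C : ℝ, 0 ≤ C ∧ ∀ c : Fin N → ℝ, Nrm u μ r c ≤ C * ‖c‖ := by
  classical
  refine ⟨∑ i, Nrm u μ r (Pi.single i 1), Finset.sum_nonneg fun i _ => Nrm_nonneg r _, fun c => ?_⟩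
  have hc : c = ∑ i, c i • (Pi.single i (1 : ℝ) : Fin N → ℝ) := by
    funext j
    simp [Finset.sum_apply, Pi.single_apply, Finset.sum_ite_eq']
  have hle : Nrm u μ r c ≤ ∑ i, |c i| * Nrm u μ r (Pi.single i 1) := by
    have h2 := Nrm_sum_le (u := u) (μ := μ) hr Finset.univ
      (fun i => c i • (Pi.single i (1 : ℝ) : Fin N → ℝ))
    rw [← hc] at h2
    refine h2.trans ?_
    apply le_of_eq
    apply Finset.sum_congr rfl
    intro i _
    exact Nrm_smul r (c i) _
  refine hle.trans ?_
  have h3 : ∀ i ∈ Finset.univ, |c i| * Nrm u μ r (Pi.single i 1) ≤ ‖c‖ * Nrm u μ r (Pi.single i 1) := by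
    intro i _
    exact mul_le_mul_of_nonneg_right (by
      simpa [Real.norm_eq_abs] using norm_le_pi_norm c i) (Nrm_nonneg r _)
  refine (Finset.sum_le_sum h3).trans ?_
  rw [← Finset.mul_sum, mul_comm]

lemma Nrm_continuous {r : ℝ} (hr : 1 ≤ r) : Continuous (Nrm u μ r : (Fin N → ℝ) → ℝ) := by
  obtain ⟨C, hC0, hC⟩ := Nrm_upper (u := u) (μ := μ) hr
  have key : ∀ c d : Fin N → ℝ, Nrm u μ r c - Nrm u μ r d ≤ C * ‖c - d‖ := by
    intro c d
    have h1 : Nrm u μ r c ≤ Nrm u μ r d + Nrm u μ r (c - d) := by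
      have heq : d + (c - d) = c := by abel
      calc Nrm u μ r c = Nrm u μ r (d + (c - d)) := by rw [heq]
        _ ≤ Nrm u μ r d + Nrm u μ r (c - d) := Nrm_triangle hr _ _
    have h2 := hC (c - d)
    linarith
  rw [Metric.continuous_iff]
  intro c ε hε
  refine ⟨ε / (C + 1), div_pos hε (by linarith), fun d hd => ?_⟩
  rw [Real.dist_eq, abs_lt]
  have h1 := key d c
  have h2 := key c d
  have hn1 : ‖d - c‖ = dist d c := (dist_eq_norm d c).symm
  have hn2 : ‖c - d‖ = dist d c := by rw [← hn1, norm_sub_rev]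
  rw [hn1] at h1; rw [hn2] at h2
  have hd' : C * dist d c < ε := by
    have ha : C * dist d c ≤ C * (ε / (C + 1)) := mul_le_mul_of_nonneg_left hd.le hC0
    have hb : C * (ε / (C + 1)) < ε := by
      rw [mul_div_assoc', div_lt_iff₀ (by linarith : (0:ℝ) < C + 1)]
      nlinarith
    linarith
  constructor <;> linarith

lemma Nrm_lower (hortho : ∀ i j, (∫ x, u i x * u j x ∂μ) = if i = j then (1 : ℝ) else 0)
    {r : ℝ} (hr : 1 ≤ r) :
    ∃ m : ℝ, 0 < m ∧ ∀ c : Fin N → ℝ, m * ‖c‖ ≤ Nrm u μ r c := by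
  rcases Nat.eq_zero_or_pos N with hN | hN
  · refine ⟨1, one_pos, fun c => ?_⟩
    have : c = 0 := by subst hN; exact Subsingleton.elim c 0
    simp [this, Nrm_nonneg]
  · haveI : Nonempty (Fin N) := ⟨⟨0, hN⟩⟩
    have hsph : (Metric.sphere (0 : Fin N → ℝ) 1).Nonempty :=
      NormedSpace.sphere_nonempty.2 zero_le_one
    obtain ⟨c₀, hc₀mem, hc₀min⟩ := (isCompact_sphere (0 : Fin N → ℝ) 1).exists_isMinOn hsph
      ((Nrm_continuous (u := u) (μ := μ) hr).continuousOn)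
    have hc₀norm : ‖c₀‖ = 1 := by simpa using hc₀mem
    have hc₀ne : c₀ ≠ 0 := by
      intro h; rw [h] at hc₀norm; simp at hc₀norm
    have hm : 0 < Nrm u μ r c₀ := by
      rcases lt_or_eq_of_le (Nrm_nonneg (u := u) (μ := μ) r c₀) with h | h
      · exact h
      · exact absurd (Nrm_eq_zero hortho hr c₀ h.symm) hc₀ne
    refine ⟨Nrm u μ r c₀, hm, fun c => ?_⟩
    rcases eq_or_ne c 0 with h | h
    · simp [h, Nrm_zero]
    · have hcn : 0 < ‖c‖ := norm_pos_iff.2 h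
      have hunit : (‖c‖⁻¹ • c) ∈ Metric.sphere (0 : Fin N → ℝ) 1 := by
        simp [norm_smul, abs_of_pos (inv_pos.2 hcn), inv_mul_cancel₀ (ne_of_gt hcn)]
      have h4 : Nrm u μ r c₀ ≤ Nrm u μ r (‖c‖⁻¹ • c) := hc₀min hunit
      have heq : Nrm u μ r (‖c‖⁻¹ • c) = ‖c‖⁻¹ * Nrm u μ r c := by
        rw [Nrm_smul, abs_of_pos (inv_pos.2 hcn)]
      rw [heq] at h4
      calc Nrm u μ r c₀ * ‖c‖ ≤ (‖c‖⁻¹ * Nrm u μ r c) * ‖c‖ :=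
            mul_le_mul_of_nonneg_right h4 (le_of_lt hcn)
        _ = Nrm u μ r c := by field_simp
    
lemma exists_maximizer (hortho : ∀ i j, (∫ x, u i x * u j x ∂μ) = if i = j then (1 : ℝ) else 0)
    {r : ℝ} (hr : 1 ≤ r) (a : Fin N → ℝ) :
    ∃ cs : Fin N → ℝ, Nrm u μ r cs ≤ 1 ∧
      ∀ c : Fin N → ℝ, Nrm u μ r c ≤ 1 → ∑ i, a i * c i ≤ ∑ i, a i * cs i := by
  obtain ⟨m, hm, hmlow⟩ := Nrm_lower hortho hr
  set K : Set (Fin N → ℝ) := {c | Nrm u μ r c ≤ 1} with hK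
  have hKclosed : IsClosed K := isClosed_le (Nrm_continuous (u := u) (μ := μ) hr) continuous_const
  have hKsub : K ⊆ Metric.closedBall 0 m⁻¹ := by
    intro c hc
    simp only [Metric.mem_closedBall, dist_zero_right]
    have h1 := hmlow c
    have h2 : Nrm u μ r c ≤ 1 := hc
    rw [← one_div, le_div_iff₀ hm]
    calc ‖c‖ * m = m * ‖c‖ := mul_comm _ _
      _ ≤ Nrm u μ r c := h1
      _ ≤ 1 := h2
  have hKcompact : IsCompact K :=
    (isCompact_closedBall (0 : Fin N → ℝ) m⁻¹).of_isClosed_subset hKclosed hKsub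
  have hKne : K.Nonempty := ⟨0, by simp [hK, Nrm_zero]⟩
  have hcont : Continuous (fun c : Fin N → ℝ => ∑ i, a i * c i) := by
    apply continuous_finset_sum
    exact fun i _ => continuous_const.mul (continuous_apply i)
  obtain ⟨cs, hcsK, hcsmax⟩ := hKcompact.exists_isMaxOn hKne hcont.continuousOn
  exact ⟨cs, hcsK, fun c hc => hcsmax hc⟩

end Stmt13Aux


namespace Stmt13Aux

/-- signed power t ↦ |t|^(r-1) sign t -/
noncomputable def sp (r : ℝ) (t : ℝ) : ℝ := |t| ^ (r - 1) * Real.sign t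

lemma sp_zero (r : ℝ) : sp r 0 = 0 := by simp [sp]

lemma abs_sp {r : ℝ} (hr : 1 < r) (t : ℝ) : |sp r t| = |t| ^ (r - 1) := by
  rcases lt_trichotomy t 0 with h | h | h
  · rw [sp, Real.sign_of_neg h, abs_mul]
    simp [abs_of_nonneg (Real.rpow_nonneg (abs_nonneg t) _)]
  · rw [h, sp_zero, abs_zero]
    exact (Real.zero_rpow (by linarith)).symm
  · rw [sp, Real.sign_of_pos h, abs_mul]
    simp [abs_of_nonneg (Real.rpow_nonneg (abs_nonneg t) _)]

lemma abs_rpow_continuous {s : ℝ} (hs : 0 ≤ s) : Continuous (fun t : ℝ => |t| ^ s) :=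
  continuous_abs.rpow_const (fun _ => Or.inr hs)

lemma sp_continuous {r : ℝ} (hr : 1 < r) : Continuous (sp r) := by
  rw [continuous_iff_continuousAt]
  intro t₀
  rcases lt_trichotomy t₀ 0 with h | h | h
  · have hev : (fun t => -(|t| ^ (r - 1))) =ᶠ[nhds t₀] sp r := by
      filter_upwards [gt_mem_nhds h] with t ht
      rw [sp, Real.sign_of_neg ht]; ring
    exact ContinuousAt.congr (((abs_rpow_continuous (by linarith)).neg).continuousAt) hev
  · subst h
    have hb : ContinuousAt (fun t : ℝ => |t| ^ (r - 1)) 0 :=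
      (abs_rpow_continuous (by linarith)).continuousAt
    have hb0 : Filter.Tendsto (fun t : ℝ => |t| ^ (r - 1)) (nhds 0) (nhds 0) := by
      have h0 : (0:ℝ) ^ (r - 1) = 0 := Real.zero_rpow (by linarith : r - 1 ≠ 0)
      simpa [ContinuousAt, h0] using hb
    have : Filter.Tendsto (sp r) (nhds 0) (nhds 0) := by
      apply squeeze_zero_norm _ hb0
      intro t
      rw [Real.norm_eq_abs, abs_sp hr]
    simpa [ContinuousAt, sp_zero] using this
  · have hev : (fun t => |t| ^ (r - 1)) =ᶠ[nhds t₀] sp r := by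
      filter_upwards [lt_mem_nhds h] with t ht
      rw [sp, Real.sign_of_pos ht]; ring
    exact ContinuousAt.congr ((abs_rpow_continuous (by linarith)).continuousAt) hev

lemma hasDerivAt_abs_rpow {r : ℝ} (hr : 1 < r) (t : ℝ) :
    HasDerivAt (fun z : ℝ => |z| ^ r) (r * sp r t) t := by
  rcases lt_trichotomy t 0 with h | h | h
  · have hne : -t ≠ 0 := by intro hh; linarith [neg_eq_zero.1 hh]
    have h1 : HasDerivAt (fun x : ℝ => x ^ r) (r * (-t) ^ (r - 1)) (-t) :=
      Real.hasDerivAt_rpow_const (Or.inl hne)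
    have h2 : HasDerivAt (fun z : ℝ => -z) (-1 : ℝ) t := (hasDerivAt_neg t)
    have h3 := h1.comp t h2
    have hev : (fun z : ℝ => (-z) ^ r) =ᶠ[nhds t] (fun z => |z| ^ r) := by
      filter_upwards [gt_mem_nhds h] with z hz
      rw [abs_of_neg hz]
    have h4 := h3.congr_of_eventuallyEq hev.symm
    refine h4.congr_deriv ?_
    rw [sp, Real.sign_of_neg h, abs_of_neg h]
    ring
  · subst h
    rw [sp_zero, mul_zero]
    rw [hasDerivAt_iff_tendsto_slope]
    have hb0 : Filter.Tendsto (fun t : ℝ => |t| ^ (r - 1)) (nhdsWithin 0 {(0:ℝ)}ᶜ) (nhds 0) := by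
      have hb : Filter.Tendsto (fun t : ℝ => |t| ^ (r - 1)) (nhds 0) (nhds 0) := by
        have h0 : (0:ℝ) ^ (r - 1) = 0 := Real.zero_rpow (by linarith : r - 1 ≠ 0)
        simpa [ContinuousAt, h0] using (abs_rpow_continuous (by linarith : (0:ℝ) ≤ r - 1)).continuousAt (x := (0:ℝ))
      exact hb.mono_left nhdsWithin_le_nhds
    apply squeeze_zero_norm' _ hb0
    filter_upwards [self_mem_nhdsWithin] with z hz
    have hz0 : z ≠ 0 := hz
    have habs : 0 < |z| := abs_pos.2 hz0
    rw [slope_def_field]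
    have h5 : (|z| ^ r - |(0:ℝ)| ^ r) / (z - 0) = |z| ^ r / z := by
      simp [Real.zero_rpow (by linarith : r ≠ 0)]
    rw [h5, Real.norm_eq_abs, abs_div, abs_of_nonneg (Real.rpow_nonneg (abs_nonneg z) r)]
    rw [Real.rpow_sub habs, Real.rpow_one]
  · have h1 : HasDerivAt (fun x : ℝ => x ^ r) (r * t ^ (r - 1)) t :=
      Real.hasDerivAt_rpow_const (Or.inl (ne_of_gt h))
    have hev : (fun z : ℝ => z ^ r) =ᶠ[nhds t] (fun z => |z| ^ r) := by
      filter_upwards [lt_mem_nhds h] with z hz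
      rw [abs_of_pos hz]
    have h4 := h1.congr_of_eventuallyEq hev.symm
    refine h4.congr_deriv ?_
    rw [sp, Real.sign_of_pos h, abs_of_pos h]
    ring

end Stmt13Aux


namespace Stmt13Aux

variable {Ω : Type} [TopologicalSpace Ω] [CompactSpace Ω]
  [MeasurableSpace Ω] [BorelSpace Ω]
  {μ : Measure Ω} [IsProbabilityMeasure μ]
  {N : ℕ} {u : Fin N → C(Ω, ℝ)}

lemma fc_single_apply (j : Fin N) (y : Ω) : fc u (Pi.single j (1:ℝ)) y = u j y := by
  simp [fc, Pi.single_apply, ite_mul, Finset.sum_ite_eq']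

lemma hasDerivAt_F {r : ℝ} (hr : 1 < r) (c d : Fin N → ℝ) :
    HasDerivAt (fun t : ℝ => ∫ y, |fc u c y + t * fc u d y| ^ r ∂μ)
      (∫ y, (r * sp r (fc u c y)) * fc u d y ∂μ) 0 := by
  obtain ⟨Cc, hCc0, hCc⟩ := cont_bound (fc u c) (fc_cont c)
  obtain ⟨Cd, hCd0, hCd⟩ := cont_bound (fc u d) (fc_cont d)
  have hcont : ∀ t : ℝ, Continuous (fun y => fc u c y + t * fc u d y) := fun t =>
    (fc_cont c).add (continuous_const.mul (fc_cont d))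
  have key := hasDerivAt_integral_of_dominated_loc_of_deriv_le (μ := μ)
    (F := fun (t : ℝ) (y : Ω) => |fc u c y + t * fc u d y| ^ r)
    (F' := fun (t : ℝ) (y : Ω) => (r * sp r (fc u c y + t * fc u d y)) * fc u d y)
    (x₀ := (0:ℝ)) (s := Metric.ball (0:ℝ) 1) (bound := fun _ => r * (Cc + Cd) ^ (r - 1) * Cd)
    (Metric.ball_mem_nhds 0 one_pos)
    (Filter.Eventually.of_forall fun t =>
      (((hcont t).abs.rpow_const (fun y => Or.inr (by linarith))).aestronglyMeasurable))
    (integrable_cont _ ((hcont 0).abs.rpow_const (fun y => Or.inr (by linarith))))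
    (((continuous_const.mul ((sp_continuous hr).comp (hcont 0))).mul
      (fc_cont d)).aestronglyMeasurable)
    (Filter.Eventually.of_forall fun y => ?_)
    (integrable_const _)
    (Filter.Eventually.of_forall fun y => ?_)
  · have heq : (fun y => (r * sp r (fc u c y + 0 * fc u d y)) * fc u d y)
        = (fun y => (r * sp r (fc u c y)) * fc u d y) := by
      funext y; norm_num
    rw [heq] at key
    exact key.2
  · -- bound
    intro t ht
    simp only [Real.norm_eq_abs, abs_mul, abs_sp hr]
    have h1 : |fc u c y + t * fc u d y| ≤ Cc + Cd := by
      have := abs_add_le (fc u c y) (t * fc u d y)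
      have h2 : |t * fc u d y| ≤ Cd := by
        rw [abs_mul]
        have ht1 : |t| ≤ 1 := by
          simp only [Metric.mem_ball, dist_zero_right, Real.norm_eq_abs] at ht
          linarith
        calc |t| * |fc u d y| ≤ 1 * Cd :=
              mul_le_mul ht1 (hCd y) (abs_nonneg _) zero_le_one
          _ = Cd := one_mul Cd
      linarith [hCc y]
    have h3 : |fc u c y + t * fc u d y| ^ (r - 1) ≤ (Cc + Cd) ^ (r - 1) :=
      Real.rpow_le_rpow (abs_nonneg _) h1 (by linarith)
    have h4 : (0:ℝ) ≤ (Cc + Cd) ^ (r - 1) := Real.rpow_nonneg (by linarith) _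
    calc |r| * |fc u c y + t * fc u d y| ^ (r - 1) * |fc u d y|
        ≤ |r| * (Cc + Cd) ^ (r - 1) * Cd := by
          apply mul_le_mul _ (hCd y) (abs_nonneg _) _
          · exact mul_le_mul_of_nonneg_left h3 (abs_nonneg r)
          · positivity
      _ = r * (Cc + Cd) ^ (r - 1) * Cd := by rw [abs_of_pos (by linarith : (0:ℝ) < r)]
  · -- derivative
    intro t ht
    have hinner : HasDerivAt (fun s : ℝ => fc u c y + s * fc u d y) (fc u d y) t :=
      (hasDerivAt_mul_const (fc u d y)).const_add (fc u c y)
    have houter := hasDerivAt_abs_rpow hr (fc u c y + t * fc u d y)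
    exact houter.comp t hinner

lemma sign_mul_self {x : ℝ} (h : x ≠ 0) : Real.sign x * x = |x| := by
  rcases lt_or_gt_of_ne h with hx | hx
  · rw [Real.sign_of_neg hx, abs_of_neg hx]; ring
  · rw [Real.sign_of_pos hx, abs_of_pos hx]; ring

lemma abs_sign {x : ℝ} (h : x ≠ 0) : |Real.sign x| = 1 := by
  rcases lt_or_gt_of_ne h with hx | hx
  · rw [Real.sign_of_neg hx]; norm_num
  · rw [Real.sign_of_pos hx]; norm_num

lemma max_zero_imp_a_zero (hortho : ∀ i j, (∫ x, u i x * u j x ∂μ) = if i = j then (1 : ℝ) else 0)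
    {r : ℝ} (hr : 1 ≤ r) (a cs : Fin N → ℝ)
    (hmax : ∀ c, Nrm u μ r c ≤ 1 → ∑ i, a i * c i ≤ ∑ i, a i * cs i)
    (hL : ∑ i, a i * cs i = 0) : a = 0 := by
  funext j
  by_contra haj
  have hej : (Pi.single j (1:ℝ) : Fin N → ℝ) ≠ 0 := by
    intro h
    have := congrFun h j
    simp at this
  have hn0 : 0 < Nrm u μ r (Pi.single j (1:ℝ)) := by
    rcases lt_or_eq_of_le (Nrm_nonneg (u := u) (μ := μ) r (Pi.single j 1)) with h | h
    · exact h
    · exact absurd (Nrm_eq_zero hortho hr _ h.symm) hej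
  set n := Nrm u μ r (Pi.single j (1:ℝ)) with hn
  set c : Fin N → ℝ := (n⁻¹ * Real.sign (a j)) • (Pi.single j (1:ℝ) : Fin N → ℝ) with hc
  have hNc : Nrm u μ r c ≤ 1 := by
    rw [hc, Nrm_smul, abs_mul, abs_sign haj, abs_of_pos (inv_pos.2 hn0), ← hn]
    rw [mul_one, inv_mul_cancel₀ (ne_of_gt hn0)]
  have hsum : ∑ i, a i * c i = n⁻¹ * |a j| := by
    rw [hc]
    simp only [Pi.smul_apply, smul_eq_mul]
    have : ∀ i, a i * (n⁻¹ * Real.sign (a j) * (Pi.single j (1:ℝ) : Fin N → ℝ) i)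
        = if i = j then n⁻¹ * (Real.sign (a j) * a j) else 0 := by
      intro i
      rcases eq_or_ne i j with h | h
      · subst h; simp [Pi.single_apply]; ring
      · simp [Pi.single_apply, h]
    rw [Finset.sum_congr rfl (fun i _ => this i)]
    rw [Finset.sum_ite_eq' Finset.univ j]
    simp [sign_mul_self haj]
  have := hmax c hNc
  rw [hsum, hL] at this
  have : 0 < n⁻¹ * |a j| := mul_pos (inv_pos.2 hn0) (abs_pos.2 haj)
  linarith [hmax c hNc, hsum ▸ (hL ▸ hmax c hNc)]

end Stmt13Aux


namespace Stmt13Aux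

variable {Ω : Type} [TopologicalSpace Ω] [CompactSpace Ω]
  [MeasurableSpace Ω] [BorelSpace Ω]
  {μ : Measure Ω} [IsProbabilityMeasure μ]
  {N : ℕ} {u : Fin N → C(Ω, ℝ)}

lemma fc_add_smul_single (cs : Fin N → ℝ) (t : ℝ) (j : Fin N) (y : Ω) :
    fc u (cs + t • (Pi.single j (1:ℝ) : Fin N → ℝ)) y = fc u cs y + t * u j y := by
  have h1 : fc u (cs + t • (Pi.single j (1:ℝ) : Fin N → ℝ)) y
      = fc u cs y + t * fc u (Pi.single j (1:ℝ)) y := by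
    simp only [fc, Pi.add_apply, Pi.smul_apply, smul_eq_mul, add_mul, Finset.sum_add_distrib,
      Finset.mul_sum, mul_assoc]
  rw [h1, fc_single_apply]

lemma sum_a_add_single (a cs : Fin N → ℝ) (t : ℝ) (j : Fin N) :
    ∑ i, a i * (cs + t • (Pi.single j (1:ℝ) : Fin N → ℝ)) i
      = (∑ i, a i * cs i) + t * a j := by
  simp only [Pi.add_apply, Pi.smul_apply, smul_eq_mul, mul_add, Finset.sum_add_distrib]
  congr 1
  have : ∀ i, a i * (t * (Pi.single j (1:ℝ) : Fin N → ℝ) i) = if i = j then t * a j else 0 := by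
    intro i
    rcases eq_or_ne i j with h | h
    · subst h; simp [Pi.single_apply]; ring
    · simp [Pi.single_apply, h]
  rw [Finset.sum_congr rfl fun i _ => this i, Finset.sum_ite_eq' Finset.univ j]
  simp

lemma lagrange (hortho : ∀ i j, (∫ x, u i x * u j x ∂μ) = if i = j then (1 : ℝ) else 0)
    {r : ℝ} (hr : 1 < r) (a cs : Fin N → ℝ)
    (hcs : Nrm u μ r cs ≤ 1)
    (hmax : ∀ c, Nrm u μ r c ≤ 1 → ∑ i, a i * c i ≤ ∑ i, a i * cs i)
    (hL : 0 < ∑ i, a i * cs i) :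
    (∫ y, |fc u cs y| ^ r ∂μ) = 1 ∧
    (∀ j, (∑ i, a i * cs i) * ∫ y, sp r (fc u cs y) * u j y ∂μ = a j) := by
  have hr1 : (1:ℝ) ≤ r := le_of_lt hr
  set L := ∑ i, a i * cs i with hLdef
  -- step 1 : Nrm cs = 1
  have hNrm1 : Nrm u μ r cs = 1 := by
    rcases lt_or_eq_of_le hcs with hlt | heq
    · exfalso
      rcases lt_or_eq_of_le (Nrm_nonneg (u := u) (μ := μ) r cs) with hpos | hzero
      · set tt := (Nrm u μ r cs)⁻¹ with htt
        have htt1 : 1 < tt := by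
          rw [htt]
          exact (one_lt_inv₀ hpos).mpr hlt
        have hNt : Nrm u μ r (tt • cs) ≤ 1 := by
          rw [Nrm_smul, abs_of_pos (inv_pos.2 hpos), inv_mul_cancel₀ (ne_of_gt hpos)]
        have hsum : ∑ i, a i * (tt • cs) i = tt * L := by
          simp only [Pi.smul_apply, smul_eq_mul, hLdef, Finset.mul_sum]
          congr 1; funext i; ring
        have := hmax _ hNt
        rw [hsum] at this
        nlinarith
      · have : cs = 0 := Nrm_eq_zero hortho hr1 cs hzero.symm
        rw [hLdef, this] at hL
        simp at hL
    · exact heq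
  -- step 2 : F cs = 1
  have hF0 : 0 ≤ ∫ y, |fc u cs y| ^ r ∂μ :=
    integral_nonneg fun y => Real.rpow_nonneg (abs_nonneg _) r
  have hF1 : (∫ y, |fc u cs y| ^ r ∂μ) = 1 := by
    have h2 := Nrm_eq_integral (u := u) (μ := μ) hr1 cs
    rw [hNrm1] at h2
    have h3 : ((∫ y, |fc u cs y| ^ r ∂μ) ^ r⁻¹) ^ r = 1 ^ r := by rw [← h2]
    rw [← Real.rpow_mul hF0, inv_mul_cancel₀ (by linarith : r ≠ 0), Real.rpow_one,
      Real.one_rpow] at h3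
    exact h3
  refine ⟨hF1, fun j => ?_⟩
  -- derivative of G
  have hG := hasDerivAt_F (u := u) (μ := μ) hr cs (Pi.single j (1:ℝ))
  simp only [fc_single_apply] at hG
  set G : ℝ → ℝ := fun t => ∫ y, |fc u cs y + t * u j y| ^ r ∂μ with hGdef
  set δ : ℝ := ∫ y, (r * sp r (fc u cs y)) * u j y ∂μ with hδdef
  have hG0 : G 0 = 1 := by
    rw [hGdef]
    simp only [zero_mul, add_zero]
    exact hF1
  have hGd : HasDerivAt G δ 0 := hG
  -- ψ and its derivative
  have h1 : HasDerivAt (fun t : ℝ => L + t * a j) (a j) 0 :=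
    (hasDerivAt_mul_const (a j)).const_add L
  have h2 : HasDerivAt (fun t => (G t) ^ (-r⁻¹)) (δ * (-r⁻¹) * (G 0) ^ (-r⁻¹ - 1)) 0 :=
    hGd.rpow_const (Or.inl (by rw [hG0]; norm_num))
  have hψ := h1.mul h2
  have hψd : HasDerivAt (fun t => (L + t * a j) * (G t) ^ (-r⁻¹))
      (a j + L * (δ * (-r⁻¹))) 0 := by
    refine hψ.congr_deriv ?_
    rw [hG0]
    simp [Real.one_rpow]
  -- local max
  have hevpos : ∀ᶠ t in nhds (0:ℝ), 0 < G t := by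
    have hcont : ContinuousAt G 0 := hGd.continuousAt
    have : ∀ᶠ s in nhds (G 0), 0 < s := by
      rw [hG0]; exact eventually_gt_nhds one_pos
    exact hcont.eventually this
  have hmaxloc : IsLocalMax (fun t => (L + t * a j) * (G t) ^ (-r⁻¹)) 0 := by
    filter_upwards [hevpos] with t hGt
    have hψ0 : (L + 0 * a j) * (G 0) ^ (-r⁻¹) = L := by
      rw [hG0]; simp [Real.one_rpow]
    rw [hψ0]
    -- the renormalized vector
    set w : Fin N → ℝ := (G t) ^ (-r⁻¹) • (cs + t • (Pi.single j (1:ℝ) : Fin N → ℝ)) with hw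
    have hNw : Nrm u μ r w ≤ 1 := by
      rw [hw, Nrm_smul]
      have hNrmt : Nrm u μ r (cs + t • (Pi.single j (1:ℝ) : Fin N → ℝ)) = (G t) ^ r⁻¹ := by
        rw [Nrm_eq_integral hr1]
        congr 1
        apply integral_congr_ae
        filter_upwards with y
        rw [fc_add_smul_single]
      rw [hNrmt, abs_of_pos (Real.rpow_pos_of_pos hGt _), ← Real.rpow_add hGt]
      simp
    have hval := hmax w hNw
    have hsumw : ∑ i, a i * w i = (G t) ^ (-r⁻¹) * (L + t * a j) := by
      rw [hw]
      simp only [Pi.smul_apply, smul_eq_mul]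
      rw [← sum_a_add_single a cs t j, Finset.mul_sum]
      congr 1; funext i; ring
    rw [hsumw] at hval
    calc (L + t * a j) * (G t) ^ (-r⁻¹) = (G t) ^ (-r⁻¹) * (L + t * a j) := mul_comm _ _
      _ ≤ L := hval
  have hderiv0 : a j + L * (δ * (-r⁻¹)) = 0 := hmaxloc.hasDerivAt_eq_zero hψd
  -- conclude
  have hδval : δ = r * ∫ y, sp r (fc u cs y) * u j y ∂μ := by
    rw [hδdef, ← integral_const_mul]
    congr 1; funext y; ring
  rw [hδval] at hderiv0
  have hrne : r ≠ 0 := by linarith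
  set I := ∫ y, sp r (fc u cs y) * u j y ∂μ with hI
  have h9 : L * (r * I * (-r⁻¹)) = -(L * I) := by
    field_simp
  rw [h9] at hderiv0
  linarith

end Stmt13Aux


namespace Stmt13Aux

variable {Ω : Type} [TopologicalSpace Ω] [CompactSpace Ω]
  [MeasurableSpace Ω] [BorelSpace Ω]
  {μ : Measure Ω} [IsProbabilityMeasure μ]
  {N : ℕ} {u : Fin N → C(Ω, ℝ)}

lemma key_construction (hortho : ∀ i j, (∫ x, u i x * u j x ∂μ) = if i = j then (1 : ℝ) else 0)
    {r : ℝ} (hr : 1 < r) (a : Fin N → ℝ) :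
    ∃ cs : Fin N → ℝ, ∃ g : Ω → ℝ,
      0 ≤ ∑ i, a i * cs i ∧
      Nrm u μ r cs ≤ 1 ∧
      (∀ c, Nrm u μ r c ≤ 1 → ∑ i, a i * c i ≤ ∑ i, a i * cs i) ∧
      Continuous g ∧
      (∀ j, ∫ y, g y * u j y ∂μ = a j) ∧
      (∀ y, |g y| = (∑ i, a i * cs i) * |fc u cs y| ^ (r - 1)) ∧
      ((0 < ∑ i, a i * cs i) → (∫ y, |fc u cs y| ^ r ∂μ) = 1) := by
  have hr1 : (1:ℝ) ≤ r := le_of_lt hr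
  obtain ⟨cs, hcs, hmax⟩ := exists_maximizer hortho hr1 a
  set L := ∑ i, a i * cs i with hLdef
  have hL0 : 0 ≤ L := by
    have h0 := hmax 0 (by rw [Nrm_zero]; norm_num)
    simpa using h0
  refine ⟨cs, fun y => L * sp r (fc u cs y), hL0, hcs, hmax, ?_, ?_, ?_, ?_⟩
  · exact continuous_const.mul ((sp_continuous hr).comp (fc_cont cs))
  · intro j
    rcases lt_or_eq_of_le hL0 with hLpos | hLzero
    · have hlag := (lagrange hortho hr a cs hcs hmax hLpos).2 j
      rw [← hlag, ← integral_const_mul]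
      congr 1; funext y; ring
    · have ha0 : a = 0 := max_zero_imp_a_zero hortho hr1 a cs hmax hLzero.symm
      have : ∀ y, L * sp r (fc u cs y) * u j y = 0 := by
        intro y; rw [← hLzero]; ring
      rw [integral_congr_ae (Filter.Eventually.of_forall this)]
      rw [ha0]
      simp
  · intro y
    rw [abs_mul, abs_of_nonneg hL0, abs_sp hr]
  · intro hLpos
    exact (lagrange hortho hr a cs hcs hmax hLpos).1

lemma g_norm {r : ℝ} (hr : 1 < r) {L : ℝ} (hL0 : 0 ≤ L) {g : Ω → ℝ} (hgc : Continuous g)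
    {cs : Fin N → ℝ}
    (habs : ∀ y, |g y| = L * |fc u cs y| ^ (r - 1))
    (hF1 : 0 < L → (∫ y, |fc u cs y| ^ r ∂μ) = 1) :
    (eLpNorm g (ENNReal.ofReal (r / (r - 1))) μ).toReal = L := by
  have hr1pos : 0 < r - 1 := by linarith
  have hr' : (1:ℝ) ≤ r / (r - 1) := by
    rw [le_div_iff₀ hr1pos]; linarith
  rcases lt_or_eq_of_le hL0 with hLpos | hLzero
  · have hmem := memLp_cont (μ := μ) g hgc (ENNReal.ofReal (r / (r - 1)))
    have hrp : (0:ℝ) < r / (r - 1) := div_pos (by linarith) hr1pos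
    rw [MemLp.eLpNorm_eq_integral_rpow_norm (ofReal_ne_zero hr') ENNReal.ofReal_ne_top hmem]
    have htr : (ENNReal.ofReal (r / (r - 1))).toReal = r / (r - 1) := ENNReal.toReal_ofReal hrp.le
    rw [htr]
    have hexp : (r - 1) * (r / (r - 1)) = r := by field_simp
    have hptw : ∀ y, ‖g y‖ ^ (r / (r - 1)) = L ^ (r / (r - 1)) * |fc u cs y| ^ r := by
      intro y
      rw [Real.norm_eq_abs, habs y,
        Real.mul_rpow hL0 (Real.rpow_nonneg (abs_nonneg _) _),
        ← Real.rpow_mul (abs_nonneg _), hexp]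
    have hint : ∫ y, ‖g y‖ ^ (r / (r - 1)) ∂μ = L ^ (r / (r - 1)) := by
      rw [integral_congr_ae (Filter.Eventually.of_forall hptw), integral_const_mul,
        hF1 hLpos, mul_one]
    rw [hint, ← Real.rpow_mul hL0, mul_inv_cancel₀ (ne_of_gt hrp), Real.rpow_one,
      ENNReal.toReal_ofReal hL0]
  · have hg0 : g = fun _ => (0:ℝ) := by
      funext y
      have := habs y
      rw [← hLzero, zero_mul, abs_eq_zero] at this
      exact this
    rw [hg0, ← hLzero]
    have : eLpNorm (fun _ : Ω => (0:ℝ)) (ENNReal.ofReal (r / (r - 1))) μ = 0 := by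
      simp [eLpNorm_zero]
    rw [this]
    simp

end Stmt13Aux


namespace Stmt13Aux

variable {Ω : Type} [TopologicalSpace Ω] [CompactSpace Ω]
  [MeasurableSpace Ω] [BorelSpace Ω]
  {μ : Measure Ω} [IsProbabilityMeasure μ]
  {N : ℕ} {u : Fin N → C(Ω, ℝ)}

lemma conj_exponent_eq {p : ℝ} (hp : 1 < p) :
    ENNReal.ofReal p / (ENNReal.ofReal p - 1) = ENNReal.ofReal (p / (p - 1)) := by
  have h1 : ENNReal.ofReal (p - 1) = ENNReal.ofReal p - 1 := by
    rw [ENNReal.ofReal_sub p zero_le_one, ENNReal.ofReal_one]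
  rw [ENNReal.ofReal_div_of_pos (by linarith), h1]

lemma conj_exponent_one :
    ENNReal.ofReal (1:ℝ) / (ENNReal.ofReal (1:ℝ) - 1) = (⊤ : ℝ≥0∞) := by
  rw [ENNReal.ofReal_one]
  simp [ENNReal.div_zero]

lemma conj_exponent_conj {p : ℝ} (hp : 1 ≤ p) :
    1 / (ENNReal.ofReal p / (ENNReal.ofReal p - 1)) + 1 / (ENNReal.ofReal p) = 1 := by
  rcases eq_or_lt_of_le hp with hp1 | hp1
  · rw [← hp1]
    rw [conj_exponent_one]
    simp
  · set P := ENNReal.ofReal p with hP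
    have hP0 : P ≠ 0 := by
      rw [hP]; simp only [ne_eq, ENNReal.ofReal_eq_zero, not_le]; linarith
    have hPtop : P ≠ ⊤ := ENNReal.ofReal_ne_top
    have hP1 : 1 ≤ P := by rw [hP]; exact ENNReal.one_le_ofReal.2 hp
    have hinv : 1 / (P / (P - 1)) = (P - 1) / P := by
      rw [one_div, ENNReal.inv_div (Or.inr hPtop) (Or.inr hP0)]
    rw [hinv, ENNReal.div_add_div_same, tsub_add_cancel_of_le hP1,
      ENNReal.div_self hP0 hPtop]

lemma holder_bound {q P : ℝ≥0∞} (hq : 1/q + 1/P = 1)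
    (φ f : Ω → ℝ) (hφ : MemLp φ q μ) (hf : MemLp f P μ) :
    Integrable (fun y => φ y * f y) μ ∧
    |∫ y, φ y * f y ∂μ| ≤ (eLpNorm φ q μ).toReal * (eLpNorm f P μ).toReal := by
  have hsm : AEStronglyMeasurable (fun y => φ y * f y) μ := hφ.1.mul hf.1
  have hsmul : (φ • f) = fun y => φ y * f y := rfl
  have hbd : eLpNorm (φ • f) 1 μ ≤ eLpNorm φ q μ * eLpNorm f P μ :=
    eLpNorm_smul_le_mul_eLpNorm (hpqr := ⟨by simpa [one_div] using hq⟩) hf.1 hφ.1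
  rw [hsmul] at hbd
  have hmem1 : MemLp (fun y => φ y * f y) 1 μ :=
    ⟨hsm, lt_of_le_of_lt hbd (ENNReal.mul_lt_top hφ.2 hf.2)⟩
  have hint : Integrable (fun y => φ y * f y) μ := memLp_one_iff_integrable.1 hmem1
  refine ⟨hint, ?_⟩
  have h1 : |∫ y, φ y * f y ∂μ| ≤ ∫ y, |φ y| * |f y| ∂μ := by
    simpa [Real.norm_eq_abs, abs_mul] using
      norm_integral_le_integral_norm (μ := μ) (fun y => φ y * f y)
  have h2 : ∫ y, |φ y| * |f y| ∂μ = (eLpNorm (fun y => φ y * f y) 1 μ).toReal := by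
    rw [MemLp.eLpNorm_eq_integral_rpow_norm one_ne_zero ENNReal.one_ne_top hmem1]
    rw [ENNReal.toReal_ofReal]
    · simp [Real.norm_eq_abs, abs_mul]
    · positivity
  have h3 : (eLpNorm (fun y => φ y * f y) 1 μ).toReal
      ≤ (eLpNorm φ q μ).toReal * (eLpNorm f P μ).toReal := by
    rw [← ENNReal.toReal_mul]
    exact ENNReal.toReal_mono (ENNReal.mul_lt_top hφ.2 hf.2).ne hbd
  linarith
end Stmt13Aux


namespace Stmt13Aux

variable {Ω : Type} [TopologicalSpace Ω] [CompactSpace Ω]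
  [MeasurableSpace Ω] [BorelSpace Ω]
  {μ : Measure Ω} [IsProbabilityMeasure μ]
  {N : ℕ} {u : Fin N → C(Ω, ℝ)}

lemma coe_sum_smul (c : Fin N → ℝ) (y : Ω) :
    (∑ i, c i • u i : C(Ω, ℝ)) y = fc u c y := by
  simp [fc]

lemma sum_smul_mem (XN : Submodule ℝ C(Ω, ℝ)) (hXN : XN = Submodule.span ℝ (Set.range u))
    (c : Fin N → ℝ) : (∑ i, c i • u i : C(Ω, ℝ)) ∈ XN := by
  rw [hXN]
  exact Submodule.sum_mem _ fun i _ =>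
    Submodule.smul_mem _ _ (Submodule.subset_span ⟨i, rfl⟩)

lemma mem_XN_coeffs (XN : Submodule ℝ C(Ω, ℝ)) (hXN : XN = Submodule.span ℝ (Set.range u))
    {f : C(Ω, ℝ)} (hf : f ∈ XN) : ∃ c : Fin N → ℝ, ∀ y, f y = fc u c y := by
  rw [hXN, Submodule.mem_span_range_iff_exists_fun] at hf
  obtain ⟨c, hc⟩ := hf
  refine ⟨c, fun y => ?_⟩
  rw [← hc]
  exact (coe_sum_smul c y)

lemma ortho_int (hortho : ∀ i j, (∫ x, u i x * u j x ∂μ) = if i = j then (1 : ℝ) else 0)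
    (a : Fin N → ℝ) (g : Ω → ℝ) (hg : Continuous g)
    (hints : ∀ j, ∫ y, g y * u j y ∂μ = a j) (c : Fin N → ℝ) :
    ∫ y, (fc u a y - g y) * fc u c y ∂μ = 0 := by
  have h1 : Integrable (fun y => fc u a y * fc u c y) μ :=
    integrable_cont _ ((fc_cont a).mul (fc_cont c))
  have h2 : Integrable (fun y => g y * fc u c y) μ :=
    integrable_cont _ (hg.mul (fc_cont c))
  have hsub : (fun y => (fc u a y - g y) * fc u c y)
      = fun y => fc u a y * fc u c y - g y * fc u c y := by funext y; ring
  rw [hsub, integral_sub h1 h2, int_fc_fc hortho]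
  have h3 : ∫ y, g y * fc u c y ∂μ = ∑ j, c j * a j := by
    have hpt : ∀ y, g y * fc u c y = ∑ j, c j * (g y * u j y) := by
      intro y
      show g y * (∑ j, c j * u j y) = _
      rw [Finset.mul_sum]; congr 1; funext j; ring
    rw [integral_congr_ae (Filter.Eventually.of_forall hpt),
      integral_finset_sum _ (fun j _ => (integrable_cont (fun y => g y * u j y) (hg.mul (u j).continuous)).const_mul _)]
    apply Finset.sum_congr rfl
    intro j _
    rw [integral_const_mul, hints j]
  rw [h3]
  have h4 : ∑ i, a i * c i = ∑ j, c j * a j :=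
    Finset.sum_congr rfl fun i _ => mul_comm _ _
  linarith

lemma sup_char (hortho : ∀ i j, (∫ x, u i x * u j x ∂μ) = if i = j then (1 : ℝ) else 0)
    {p : ℝ} (hp1 : 1 ≤ p) (x : Ω)
    (XN : Submodule ℝ C(Ω, ℝ)) (hXN : XN = Submodule.span ℝ (Set.range u))
    (cs : Fin N → ℝ) (hcs : Nrm u μ p cs ≤ 1)
    (hmax : ∀ c, Nrm u μ p c ≤ 1 → ∑ i, (u i x) * c i ≤ ∑ i, (u i x) * cs i) :
    sSup {r : ℝ | ∃ f : C(Ω, ℝ), f ∈ XN ∧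
        (eLpNorm (fun y => f y) (ENNReal.ofReal p) μ).toReal ≤ 1 ∧ r = |f x|}
      = ∑ i, (u i x) * cs i := by
  set L := ∑ i, (u i x) * cs i with hLdef
  have hL0 : 0 ≤ L := by
    have h0 := hmax 0 (by rw [Nrm_zero]; norm_num)
    simpa using h0
  have hub : ∀ s ∈ {r : ℝ | ∃ f : C(Ω, ℝ), f ∈ XN ∧
      (eLpNorm (fun y => f y) (ENNReal.ofReal p) μ).toReal ≤ 1 ∧ r = |f x|}, s ≤ L := by
    rintro s ⟨f, hfXN, hfnorm, rfl⟩
    obtain ⟨c, hc⟩ := mem_XN_coeffs XN hXN hfXN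
    have hcoe : (fun y => f y) = fc u c := funext hc
    rw [hcoe] at hfnorm
    have hNc : Nrm u μ p c ≤ 1 := hfnorm
    have hfx : f x = ∑ i, (u i x) * c i := by
      rw [hc x]
      exact Finset.sum_congr rfl fun i _ => mul_comm _ _
    rw [hfx]
    have hneg : Nrm u μ p (-c) ≤ 1 := by
      have : (-c : Fin N → ℝ) = (-1 : ℝ) • c := by funext i; simp
      rw [this, Nrm_smul]
      simpa using hNc
    have h1 := hmax c hNc
    have h2 := hmax (-c) hneg
    have h2' : -(∑ i, (u i x) * c i) ≤ L := by
      have heq : ∑ i, (u i x) * (-c) i = -(∑ i, (u i x) * c i) := by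
        rw [← Finset.sum_neg_distrib]
        exact Finset.sum_congr rfl fun i _ => by simp
      rw [heq] at h2
      exact h2
    rw [abs_le]
    constructor <;> linarith
  have hLS : L ∈ {r : ℝ | ∃ f : C(Ω, ℝ), f ∈ XN ∧
      (eLpNorm (fun y => f y) (ENNReal.ofReal p) μ).toReal ≤ 1 ∧ r = |f x|} := by
    refine ⟨∑ i, cs i • u i, sum_smul_mem XN hXN cs, ?_, ?_⟩
    · have hcoe : (fun y => (∑ i, cs i • u i : C(Ω, ℝ)) y) = fc u cs :=
        funext (coe_sum_smul cs)
      rw [hcoe]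
      exact hcs
    · rw [coe_sum_smul cs x]
      have : fc u cs x = ∑ i, (u i x) * cs i :=
        Finset.sum_congr rfl fun i _ => mul_comm _ _
      rw [this, ← hLdef, abs_of_nonneg hL0]
  exact le_antisymm (csSup_le ⟨L, hLS⟩ hub) (le_csSup ⟨L, hub⟩ hLS)

end Stmt13Aux


namespace Stmt13Aux

variable {Ω : Type} [TopologicalSpace Ω] [CompactSpace Ω]
  [MeasurableSpace Ω] [BorelSpace Ω]
  {μ : Measure Ω} [IsProbabilityMeasure μ]
  {N : ℕ} {u : Fin N → C(Ω, ℝ)}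

lemma fc_bound (c : Fin N → ℝ) (y : Ω) : |fc u c y| ≤ ‖c‖ * ∑ i, ‖u i‖ := by
  have h1 : |fc u c y| ≤ ∑ i, |c i * u i y| := Finset.abs_sum_le_sum_abs _ _
  refine h1.trans ?_
  rw [Finset.mul_sum]
  apply Finset.sum_le_sum
  intro i _
  rw [abs_mul]
  apply mul_le_mul
  · simpa [Real.norm_eq_abs] using norm_le_pi_norm c i
  · simpa [Real.norm_eq_abs] using ContinuousMap.norm_coe_le_norm (u i) y
  · exact abs_nonneg _
  · exact norm_nonneg _

lemma lower_bound (hortho : ∀ i j, (∫ x, u i x * u j x ∂μ) = if i = j then (1 : ℝ) else 0)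
    {p : ℝ} (hp1 : 1 ≤ p) (x : Ω)
    (XN : Submodule ℝ C(Ω, ℝ)) (hXN : XN = Submodule.span ℝ (Set.range u))
    (cs : Fin N → ℝ) (hcs : Nrm u μ p cs ≤ 1)
    (v : Ω → ℝ) (hv : MemLp v (ENNReal.ofReal p / (ENNReal.ofReal p - 1)) μ)
    (hvo : ∀ f : C(Ω, ℝ), f ∈ XN → (∫ y, v y * f y ∂μ) = 0) :
    ∑ i, (u i x) * cs i ≤
      (eLpNorm (fun y => (∑ i, u i x * u i y) - v y)
        (ENNReal.ofReal p / (ENNReal.ofReal p - 1)) μ).toReal := by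
  set Q := ENNReal.ofReal p / (ENNReal.ofReal p - 1) with hQ
  set a : Fin N → ℝ := fun i => u i x with ha
  have hQconj : 1 / Q + 1 / (ENNReal.ofReal p) = 1 := conj_exponent_conj hp1
  -- orthogonality against fc cs
  have hva : ∫ y, v y * fc u cs y ∂μ = 0 := by
    have hmem := sum_smul_mem XN hXN cs
    have h0 := hvo _ hmem
    have hcoe : (fun y => v y * (∑ i, cs i • u i : C(Ω, ℝ)) y) = fun y => v y * fc u cs y := by
      funext y; rw [coe_sum_smul]
    rw [← hcoe]
    exact h0
  set g' : Ω → ℝ := fun y => fc u a y - v y with hg'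
  have hg'mem : MemLp g' Q μ := (memLp_cont (fc u a) (fc_cont a) Q).sub hv
  have hfcmem : MemLp (fc u cs) (ENNReal.ofReal p) μ := memLp_cont _ (fc_cont cs) _
  have hold := holder_bound hQconj g' (fc u cs) hg'mem hfcmem
  have hvint := (holder_bound hQconj v (fc u cs) hv hfcmem).1
  have hkey : ∫ y, g' y * fc u cs y ∂μ = ∑ i, a i * cs i := by
    have hsplit : (fun y => g' y * fc u cs y)
        = fun y => fc u a y * fc u cs y - v y * fc u cs y := by
      funext y; rw [hg']; ring
    rw [hsplit, integral_sub (integrable_cont (fun y => fc u a y * fc u cs y) ((fc_cont a).mul (fc_cont cs))) hvint,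
      int_fc_fc hortho, hva, sub_zero]
  have hfceq : (fun y => (∑ i, u i x * u i y) - v y) = g' := by
    funext y
    show (∑ i, u i x * u i y) - v y = fc u a y - v y
    rfl
  rw [hfceq]
  have h1 : ∑ i, a i * cs i ≤ |∫ y, g' y * fc u cs y ∂μ| := by
    rw [hkey]; exact le_abs_self _
  have h2 := hold.2
  have h3 : (eLpNorm (fc u cs) (ENNReal.ofReal p) μ).toReal ≤ 1 := hcs
  have h4 : (0:ℝ) ≤ (eLpNorm g' Q μ).toReal := ENNReal.toReal_nonneg
  calc ∑ i, (u i x) * cs i = ∑ i, a i * cs i := rfl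
    _ ≤ |∫ y, g' y * fc u cs y ∂μ| := h1
    _ ≤ (eLpNorm g' Q μ).toReal * (eLpNorm (fc u cs) (ENNReal.ofReal p) μ).toReal := h2
    _ ≤ (eLpNorm g' Q μ).toReal * 1 := mul_le_mul_of_nonneg_left h3 h4
    _ = (eLpNorm g' Q μ).toReal := mul_one _

end Stmt13Aux

end Stmt13AuxSection

open Stmt13Aux
open scoped ENNReal

/-- Pointwise Nikol'skii duality: for an `N`-dimensional subspace
`X_N ⊆ C(Ω)` with `L_2(μ)`-orthonormal basis `u` and reproducing kernel
`D_N(x,y) = ∑ u_i(x)u_i(y)`, and `1 ≤ p < ∞` with conjugate `p' = p/(p-1)`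
(as an `ℝ≥0∞`, so `p' = ∞` when `p = 1`), for every `x ∈ Ω`:
`sup {|f(x)| : f ∈ X_N, ‖f‖_p ≤ 1} = inf {‖D_N(x,·) - v‖_{p'} : v ∈ L_{p'}, v ⊥ X_N}`. -/
theorem stmt13 (Ω : Type) [TopologicalSpace Ω] [CompactSpace Ω]
    [MeasurableSpace Ω] [BorelSpace Ω]
    (μ : Measure Ω) [IsProbabilityMeasure μ]
    (N : ℕ) (u : Fin N → C(Ω, ℝ))
    (XN : Submodule ℝ C(Ω, ℝ)) (hXN : XN = Submodule.span ℝ (Set.range u))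
    (hortho : ∀ i j, (∫ x, u i x * u j x ∂μ) = if i = j then (1 : ℝ) else 0)
    (p : ℝ) (hp1 : 1 ≤ p) (x : Ω) :
    sSup {r : ℝ | ∃ f : C(Ω, ℝ), f ∈ XN ∧
        (eLpNorm (fun y => f y) (ENNReal.ofReal p) μ).toReal ≤ 1 ∧ r = |f x|}
      = sInf {s : ℝ | ∃ v : Ω → ℝ,
          MemLp v (ENNReal.ofReal p / (ENNReal.ofReal p - 1)) μ ∧
          (∀ f : C(Ω, ℝ), f ∈ XN → (∫ y, v y * f y ∂μ) = 0) ∧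
          s = (eLpNorm (fun y => (∑ i, u i x * u i y) - v y)
                (ENNReal.ofReal p / (ENNReal.ofReal p - 1)) μ).toReal} := by
  classical
  rcases eq_or_lt_of_le hp1 with hp | hp
  · -- case p = 1
    subst hp
    have hQ : ENNReal.ofReal (1:ℝ) / (ENNReal.ofReal (1:ℝ) - 1) = ⊤ := conj_exponent_one
    obtain ⟨cs0, hcs0, hmax0⟩ := exists_maximizer (μ := μ) hortho le_rfl (fun i => u i x)
    have hsup := sup_char (μ := μ) hortho le_rfl x XN hXN cs0 hcs0 hmax0
    rw [hsup]
    set T := {s : ℝ | ∃ v : Ω → ℝ,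
          MemLp v (ENNReal.ofReal (1:ℝ) / (ENNReal.ofReal (1:ℝ) - 1)) μ ∧
          (∀ f : C(Ω, ℝ), f ∈ XN → (∫ y, v y * f y ∂μ) = 0) ∧
          s = (eLpNorm (fun y => (∑ i, u i x * u i y) - v y)
                (ENNReal.ofReal (1:ℝ) / (ENNReal.ofReal (1:ℝ) - 1)) μ).toReal} with hT
    set L := ∑ i, u i x * cs0 i with hL
    have hL0 : 0 ≤ L := by
      have h0 := hmax0 0 (by rw [Nrm_zero]; norm_num)
      simpa using h0
    have hlb : ∀ s ∈ T, L ≤ s := by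
      rintro s ⟨w, hw, hwo, rfl⟩
      exact lower_bound hortho le_rfl x XN hXN cs0 hcs0 w hw hwo
    have hexists : ∀ ε : ℝ, 0 < ε → ∃ s ∈ T, s ≤ L + ε := by
      intro ε hε
      obtain ⟨m, hm, hmlow⟩ := Nrm_lower (u := u) (μ := μ) hortho le_rfl
      set Kb := ∑ i, ‖u i‖ with hKb
      have hKb0 : 0 ≤ Kb := Finset.sum_nonneg fun i _ => norm_nonneg _
      set C' := max (m⁻¹ * Kb) 1 with hC'
      have hC'1 : (1:ℝ) ≤ C' := le_max_right _ _
      have hC'0 : (0:ℝ) < C' := lt_of_lt_of_le one_pos hC'1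
      have hcontC : ContinuousAt (fun s : ℝ => C' ^ s) 0 :=
        Real.continuousAt_const_rpow (ne_of_gt hC'0)
      have hev : ∀ᶠ s in nhds (0:ℝ), C' ^ s < 1 + ε / (L + 1) := by
        have h1 : (1:ℝ) < 1 + ε / (L + 1) := by
          have : 0 < ε / (L + 1) := div_pos hε (by linarith)
          linarith
        have h2 : ∀ᶠ z in nhds (C' ^ (0:ℝ)), z < 1 + ε / (L + 1) := by
          rw [Real.rpow_zero]
          exact eventually_lt_nhds h1
        exact hcontC.eventually h2
      have hself : ∀ᶠ t in nhdsWithin (0:ℝ) (Set.Ioi 0), t ∈ Set.Ioi (0:ℝ) :=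
        self_mem_nhdsWithin
      obtain ⟨t, htlt, htpos⟩ :=
        ((hev.filter_mono (nhdsWithin_le_nhds (s := Set.Ioi (0:ℝ)))).and hself).exists
      have htpos' : (0:ℝ) < t := htpos
      have hρ : (1:ℝ) < 1 + t := by linarith
      obtain ⟨cs, g, hLρ0, hcsρ, hmaxρ, hgc, hgint, hgabs, _⟩ :=
        key_construction (μ := μ) hortho hρ (fun i => u i x)
      have hcs1 : Nrm u μ 1 cs ≤ 1 :=
        le_trans (Nrm_mono_exponent le_rfl (by linarith) cs) hcsρ
      have hLρL : (∑ i, u i x * cs i) ≤ L := hmax0 cs hcs1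
      have hcsnorm : ‖cs‖ ≤ m⁻¹ := by
        have h1 := hmlow cs
        rw [← one_div, le_div_iff₀ hm]
        calc ‖cs‖ * m = m * ‖cs‖ := mul_comm _ _
          _ ≤ Nrm u μ 1 cs := h1
          _ ≤ 1 := hcs1
      have hfcb : ∀ y, |fc u cs y| ≤ C' := by
        intro y
        refine (fc_bound cs y).trans ?_
        calc ‖cs‖ * Kb ≤ m⁻¹ * Kb := mul_le_mul_of_nonneg_right hcsnorm hKb0
          _ ≤ C' := le_max_left _ _
      have hgbd : ∀ y, |g y| ≤ L * C' ^ t := by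
        intro y
        rw [hgabs y]
        have hexp : (1 + t) - 1 = t := by ring
        rw [hexp]
        exact mul_le_mul hLρL (Real.rpow_le_rpow (abs_nonneg _) (hfcb y) htpos'.le)
          (Real.rpow_nonneg (abs_nonneg _) _) hL0
      set v : Ω → ℝ := fun y => fc u (fun i => u i x) y - g y with hv
      have hvmem : MemLp v (ENNReal.ofReal (1:ℝ) / (ENNReal.ofReal (1:ℝ) - 1)) μ :=
        memLp_cont _ ((fc_cont _).sub hgc) _
      have hvortho : ∀ f : C(Ω, ℝ), f ∈ XN → (∫ y, v y * f y ∂μ) = 0 := by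
        intro f hf
        obtain ⟨c, hc⟩ := mem_XN_coeffs XN hXN hf
        have hpt : (fun y => v y * f y)
            = fun y => (fc u (fun i => u i x) y - g y) * fc u c y := by
          funext y; rw [hv, hc y]
        rw [hpt]
        exact ortho_int hortho _ g hgc hgint c
      have hptg : (fun y => (∑ i, u i x * u i y) - v y) = g := by
        funext y
        show (∑ i, u i x * u i y) - (fc u (fun i => u i x) y - g y) = g y
        have h : fc u (fun i => u i x) y = ∑ i, u i x * u i y := rfl
        rw [h]; ring
      refine ⟨(eLpNorm (fun y => (∑ i, u i x * u i y) - v y)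
          (ENNReal.ofReal (1:ℝ) / (ENNReal.ofReal (1:ℝ) - 1)) μ).toReal,
        ⟨v, hvmem, hvortho, rfl⟩, ?_⟩
      rw [hptg, hQ]
      have hbound : eLpNorm g ⊤ μ ≤ ENNReal.ofReal (L * C' ^ t) := by
        have h5 := eLpNorm_le_of_ae_bound (μ := μ) (p := (⊤:ℝ≥0∞)) (f := g) (C := L * C' ^ t)
          (Filter.Eventually.of_forall fun y => by rw [Real.norm_eq_abs]; exact hgbd y)
        simpa using h5
      have h6 : (eLpNorm g ⊤ μ).toReal ≤ L * C' ^ t :=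
        ENNReal.toReal_le_of_le_ofReal (mul_nonneg hL0 (Real.rpow_nonneg hC'0.le t)) hbound
      have h8 : L * C' ^ t ≤ L * (1 + ε / (L + 1)) :=
        mul_le_mul_of_nonneg_left htlt.le hL0
      have h10 : L * (ε / (L + 1)) ≤ ε := by
        have h11 : L * (ε / (L + 1)) ≤ (L + 1) * (ε / (L + 1)) :=
          mul_le_mul_of_nonneg_right (by linarith)
            (div_nonneg hε.le (by linarith))
        have h12 : (L + 1) * (ε / (L + 1)) = ε := by
          field_simp
        linarith
      have hexp2 : L * (1 + ε / (L + 1)) = L + L * (ε / (L + 1)) := by ring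
      linarith
    obtain ⟨s1, hs1T, _⟩ := hexists 1 one_pos
    refine le_antisymm (le_csInf ⟨s1, hs1T⟩ hlb) ?_
    apply le_of_forall_pos_le_add
    intro ε hε
    obtain ⟨s, hsT, hsle⟩ := hexists ε hε
    exact le_trans (csInf_le ⟨L, fun s hs => hlb s hs⟩ hsT) hsle
  · -- case p > 1
    obtain ⟨cs, g, hL0, hcs, hmax, hgc, hgint, hgabs, hgF⟩ :=
      key_construction (μ := μ) hortho hp (fun i => u i x)
    have hsup := sup_char (μ := μ) hortho hp1 x XN hXN cs hcs hmax
    rw [hsup]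
    set T := {s : ℝ | ∃ v : Ω → ℝ,
          MemLp v (ENNReal.ofReal p / (ENNReal.ofReal p - 1)) μ ∧
          (∀ f : C(Ω, ℝ), f ∈ XN → (∫ y, v y * f y ∂μ) = 0) ∧
          s = (eLpNorm (fun y => (∑ i, u i x * u i y) - v y)
                (ENNReal.ofReal p / (ENNReal.ofReal p - 1)) μ).toReal} with hT
    set L := ∑ i, u i x * cs i with hL
    -- the optimal v
    set v : Ω → ℝ := fun y => fc u (fun i => u i x) y - g y with hv
    have hvmem : MemLp v (ENNReal.ofReal p / (ENNReal.ofReal p - 1)) μ :=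
      memLp_cont _ ((fc_cont _).sub hgc) _
    have hvortho : ∀ f : C(Ω, ℝ), f ∈ XN → (∫ y, v y * f y ∂μ) = 0 := by
      intro f hf
      obtain ⟨c, hc⟩ := mem_XN_coeffs XN hXN hf
      have hpt : (fun y => v y * f y)
          = fun y => (fc u (fun i => u i x) y - g y) * fc u c y := by
        funext y; rw [hv, hc y]
      rw [hpt]
      exact ortho_int hortho _ g hgc hgint c
    have hptg : (fun y => (∑ i, u i x * u i y) - v y) = g := by
      funext y
      show (∑ i, u i x * u i y) - (fc u (fun i => u i x) y - g y) = g y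
      have h : fc u (fun i => u i x) y = ∑ i, u i x * u i y := rfl
      rw [h]; ring
    have hsval : (eLpNorm (fun y => (∑ i, u i x * u i y) - v y)
        (ENNReal.ofReal p / (ENNReal.ofReal p - 1)) μ).toReal = L := by
      rw [hptg, conj_exponent_eq hp]
      exact g_norm hp hL0 hgc hgabs hgF
    have hmemT : L ∈ T := ⟨v, hvmem, hvortho, hsval.symm⟩
    have hlb : ∀ s ∈ T, L ≤ s := by
      rintro s ⟨w, hw, hwo, rfl⟩
      exact lower_bound hortho hp1 x XN hXN cs hcs w hw hwo
    exact le_antisymm (le_csInf ⟨L, hmemT⟩ hlb) (csInf_le ⟨L, hlb⟩ hmemT)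
end
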